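/- arXiv:2511.13937 — 4 statements merged into one kernel-verified Lean document; each statement's English description precedes it below -/
import Mathlib

section
/- If the product of the (unit-modulus) edge weights along every cycle of a connected Hermitian unit-weighted graph equals 1, then there exists a function s : V → ℂ with |s(v)| = 1 for all v such that W_uv = s(u) · conj(s(v)) for every edge (u,v). Consequently, the graph is switching-equivalent to a graph with all edge weights equal to 1. -/
section Aux

variable {V : Type*} {G : SimpleGraph V} (W : V → V → ℂ)

/-- Weight product along a walk. -/
def walkProd {u v : V} (p : G.Walk u v) : ℂ :=
  (p.darts.map (fun d => W d.fst d.snd)).prod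

lemma walkProd_abs (hunit : ∀ u v, G.Adj u v → ‖W u v‖ = 1)
    {u v : V} (p : G.Walk u v) : ‖walkProd W p‖ = 1 := by
  unfold walkProd
  rw [List.norm_prod]
  apply List.prod_eq_one
  intro x hx
  simp only [List.map_map, List.mem_map] at hx
  obtain ⟨d, hd, rfl⟩ := hx
  exact hunit d.fst d.snd d.adj

lemma walkProd_conj_mul (hunit : ∀ u v, G.Adj u v → ‖W u v‖ = 1)
    {u v : V} (p : G.Walk u v) :
    starRingEnd ℂ (walkProd W p) * walkProd W p = 1 := by
  rw [mul_comm, Complex.mul_conj, ← Complex.sq_norm, walkProd_abs W hunit]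
  norm_num

lemma walkProd_reverse (hherm : ∀ u v, W v u = starRingEnd ℂ (W u v))
    {u v : V} (p : G.Walk u v) :
    walkProd W p.reverse = starRingEnd ℂ (walkProd W p) := by
  unfold walkProd
  rw [SimpleGraph.Walk.darts_reverse, List.map_reverse, List.prod_reverse,
    List.map_map, map_list_prod (starRingEnd ℂ), List.map_map]
  congr 1
  apply List.map_congr_left
  intro d _
  simp [Function.comp, hherm d.fst d.snd, SimpleGraph.Dart.symm]

end Aux

/-- If every cycle (closed walk) of a connected graph with Hermitian unit-modulus complex
weights has weight product `1`, then there is a unit-modulus `s : V → ℂ` with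
`W u v = s u · conj (s v)` on edges; consequently the graph is switching-equivalent to the
all-ones weighting. -/
theorem stmt2 {V : Type*} (G : SimpleGraph V) (hconn : G.Connected)
    (W : V → V → ℂ)
    (hunit : ∀ u v, G.Adj u v → ‖W u v‖ = 1)
    (hherm : ∀ u v, W v u = starRingEnd ℂ (W u v))
    (hbal : ∀ (u : V) (p : G.Walk u u),
      (p.darts.map (fun d => W d.fst d.snd)).prod = 1) :
    ∃ s : V → ℂ, (∀ v, ‖s v‖ = 1) ∧
      (∀ u v, G.Adj u v → W u v = s u * starRingEnd ℂ (s v)) ∧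
      (∀ u v, G.Adj u v → starRingEnd ℂ (s u) * W u v * s v = 1) := by
  classical
  obtain ⟨v₀⟩ := hconn.nonempty
  -- walk-independence of the product
  have hindep : ∀ {v : V} (p q : G.Walk v₀ v), walkProd W p = walkProd W q := by
    intro v p q
    have hc : walkProd W (p.append q.reverse) = 1 := hbal v₀ _
    have hsplit : walkProd W (p.append q.reverse) = walkProd W p * walkProd W q.reverse := by
      unfold walkProd
      rw [SimpleGraph.Walk.darts_append, List.map_append, List.prod_append]
    rw [hsplit, walkProd_reverse W hherm] at hc
    have hcc := walkProd_conj_mul W hunit q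
    calc walkProd W p = walkProd W p * (starRingEnd ℂ (walkProd W q) * walkProd W q) := by
          rw [hcc, mul_one]
      _ = (walkProd W p * starRingEnd ℂ (walkProd W q)) * walkProd W q := by ring
      _ = walkProd W q := by rw [hc, one_mul]
  let f : V → ℂ := fun v => walkProd W ((hconn v₀ v).some)
  have habsf : ∀ v, ‖f v‖ = 1 := fun v => walkProd_abs W hunit _
  have hccf : ∀ v, starRingEnd ℂ (f v) * f v = 1 := fun v => walkProd_conj_mul W hunit _
  have hstep : ∀ u v, G.Adj u v → f v = f u * W u v := by
    intro u v huv
    have h := hindep ((hconn v₀ v).some) (((hconn v₀ u).some).concat huv)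
    show walkProd W _ = walkProd W _ * W u v
    rw [h]
    unfold walkProd
    rw [SimpleGraph.Walk.darts_concat, List.concat_eq_append, List.map_append,
      List.prod_append]
    simp
  refine ⟨fun v => starRingEnd ℂ (f v), ?_, ?_, ?_⟩
  · intro v; simpa using habsf v
  · intro u v huv
    show W u v = starRingEnd ℂ (f u) * starRingEnd ℂ (starRingEnd ℂ (f v))
    rw [Complex.conj_conj]
    calc W u v = (starRingEnd ℂ (f u) * f u) * W u v := by rw [hccf u, one_mul]
      _ = starRingEnd ℂ (f u) * (f u * W u v) := by ring
      _ = starRingEnd ℂ (f u) * f v := by rw [← hstep u v huv]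
  · intro u v huv
    show starRingEnd ℂ (starRingEnd ℂ (f u)) * W u v * starRingEnd ℂ (f v) = 1
    rw [Complex.conj_conj]
    calc f u * W u v * starRingEnd ℂ (f v) = f v * starRingEnd ℂ (f v) := by
          rw [← hstep u v huv]
      _ = 1 := by rw [mul_comm]; exact hccf v
end

section
/- Let G be a structurally balanced, connected, non-bipartite Hermitian complex-weighted graph with associated unit-phase function s : V → ℂ (so W_uv = s(u) conj(s(v)) |W_uv|). Then for any initial state x(0) ∈ ℂ^n, the complex random walk x(t+1) = P x(t) converges to the steady state x̂ with x̂_j = s(j) · (Σ_k conj(s(k)) q_k x_k(0)) / (2m), where q_k = Σ_l |W_kl| and 2m = Σ_k q_k. In particular, up to a global complex constant, the limit of x_j is s(j) q_j / (2m) scaled by a constant independent of j. -/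
open Filter Finset Matrix

/-- Equality case of the triangle inequality at a vertex of maximal modulus. -/
lemma stmt11_step {n : ℕ} (A : Matrix (Fin n) (Fin n) ℝ)
    (hA0 : ∀ i j, 0 ≤ A i j) (q : Fin n → ℝ) (hq : ∀ i, q i = ∑ j, A i j)
    (u : Fin n → ℂ) (m : ℝ) (hm : 0 < m) (hmax : ∀ i, ‖u i‖ ≤ m)
    (ε : ℝ) (hε : ε = 1 ∨ ε = -1)
    (i : Fin n) (hi : ‖u i‖ = m)
    (heq : ∑ j, (A i j : ℂ) * u j = (ε : ℂ) * (q i : ℂ) * u i) :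
    ∀ j, A i j ≠ 0 → u j = (ε : ℂ) * u i := by
  set a : ℂ := (ε : ℂ) * u i with ha
  have haabs : ‖a‖ = m := by
    rcases hε with h | h <;> simp [ha, h, hi]
  have hane : a ≠ 0 := by
    intro h
    rw [h, norm_zero] at haabs
    exact hm.ne haabs
  have hca : starRingEnd ℂ a * a = ((m * m : ℝ) : ℂ) := by
    rw [mul_comm, Complex.mul_conj, Complex.normSq_eq_norm_sq, haabs]
    push_cast; ring
  have h1 : ∑ j, (A i j : ℂ) * (starRingEnd ℂ a * u j) = (q i : ℂ) * ((m * m : ℝ) : ℂ) := by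
    calc ∑ j, (A i j : ℂ) * (starRingEnd ℂ a * u j)
        = starRingEnd ℂ a * ∑ j, (A i j : ℂ) * u j := by
          rw [Finset.mul_sum]; exact Finset.sum_congr rfl fun j _ => by ring
      _ = (q i : ℂ) * (starRingEnd ℂ a * a) := by rw [heq, ha]; ring
      _ = (q i : ℂ) * ((m * m : ℝ) : ℂ) := by rw [hca]
  have hkey : ∑ j, A i j * (starRingEnd ℂ a * u j).re = q i * (m * m) := by
    have h3 := congrArg Complex.re h1
    rw [Complex.re_sum] at h3
    calc ∑ j, A i j * (starRingEnd ℂ a * u j).re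
        = ∑ j, ((A i j : ℂ) * (starRingEnd ℂ a * u j)).re :=
          Finset.sum_congr rfl fun j _ => (Complex.re_ofReal_mul _ _).symm
      _ = ((q i : ℂ) * ((m * m : ℝ) : ℂ)).re := h3
      _ = q i * (m * m) := by rw [Complex.re_ofReal_mul, Complex.ofReal_re]
  have hterm : ∀ j, (starRingEnd ℂ a * u j).re ≤ m * m := fun j => by
    calc (starRingEnd ℂ a * u j).re ≤ ‖starRingEnd ℂ a * u j‖ := Complex.re_le_norm _
      _ = m * ‖u j‖ := by rw [norm_mul, Complex.norm_conj, haabs]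
      _ ≤ m * m := by nlinarith [hmax j, hm.le]
  have hsum2 : ∑ j, A i j * (m * m) = q i * (m * m) := by rw [← Finset.sum_mul, ← hq]
  have hall := (Finset.sum_eq_sum_iff_of_le
      (fun j (_ : j ∈ Finset.univ) => mul_le_mul_of_nonneg_left (hterm j) (hA0 i j))).mp
      (hkey.trans hsum2.symm)
  intro j hAj
  have hre : (starRingEnd ℂ a * u j).re = m * m :=
    mul_left_cancel₀ hAj (hall j (Finset.mem_univ j))
  set z := starRingEnd ℂ a * u j with hz
  have habsz : ‖z‖ ≤ m * m := by
    rw [hz, norm_mul, Complex.norm_conj, haabs]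
    nlinarith [hmax j, hm.le]
  have h4 : z.re ^ 2 + z.im ^ 2 = ‖z‖ ^ 2 := by
    rw [Complex.sq_norm, Complex.normSq_apply]; ring
  have him2 : z.im ^ 2 ≤ 0 := by nlinarith [norm_nonneg z]
  have him : z.im = 0 := by nlinarith [sq_nonneg z.im]
  have hzval : z = ((m * m : ℝ) : ℂ) := by
    apply Complex.ext
    · rw [hre]; simp
    · rw [him]; simp
  have hfin : starRingEnd ℂ a * u j = starRingEnd ℂ a * a := by rw [← hz, hzval, hca]
  have hcne : starRingEnd ℂ a ≠ 0 := by simpa using hane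
  exact mul_left_cancel₀ hcne hfin

lemma stmt11_conj_pow {n : ℕ} (U D V : Matrix (Fin n) (Fin n) ℂ)
    (hUV : U * V = 1) (hVU : V * U = 1) (t : ℕ) :
    (U * D * V) ^ t = U * D ^ t * V := by
  induction t with
  | zero => simp [hUV]
  | succ t ih =>
      rw [pow_succ, ih, pow_succ]
      calc U * D ^ t * V * (U * D * V) = U * D ^ t * (V * U) * (D * V) := by
            simp only [Matrix.mul_assoc]
        _ = U * (D ^ t * D) * V := by rw [hVU]; simp only [Matrix.mul_one, Matrix.mul_assoc]


/-- Structure of eigenvalues/eigenvectors of a connected non-bipartite weighted random walk. -/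
lemma stmt11_eig {n : ℕ} (A : Matrix (Fin n) (Fin n) ℝ)
    (hsym : ∀ i j, A j i = A i j) (hA0 : ∀ i j, 0 ≤ A i j)
    (q : Fin n → ℝ) (hq : ∀ i, q i = ∑ j, A i j) (hqpos : ∀ i, 0 < q i)
    (hconn : (SimpleGraph.fromRel fun i j => A i j ≠ 0).Connected)
    (hnb : ¬ (SimpleGraph.fromRel fun i j => A i j ≠ 0).Colorable 2)
    (μ : ℝ) (u : Fin n → ℂ) (hu : u ≠ 0)
    (heig : ∀ i, ∑ j, (A i j : ℂ) * u j = (μ : ℂ) * (q i : ℂ) * u i) :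
    (-1 < μ ∧ μ ≤ 1) ∧ (μ = 1 → ∀ i j, u i = u j) := by
  set G := SimpleGraph.fromRel fun i j => A i j ≠ 0 with hG
  have hne : Nonempty (Fin n) := hconn.nonempty
  have hadj : ∀ {a b : Fin n}, G.Adj a b → A a b ≠ 0 := by
    intro a b hab
    rw [hG, SimpleGraph.fromRel_adj] at hab
    rcases hab.2 with h | h
    · exact h
    · rw [hsym b a]; exact h
  obtain ⟨i0, -, hi0⟩ := Finset.exists_max_image Finset.univ (fun i => ‖u i‖)
    Finset.univ_nonempty
  have hmax : ∀ i, ‖u i‖ ≤ ‖u i0‖ := fun i => hi0 i (Finset.mem_univ i)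
  set m := ‖u i0‖ with hm'
  have hm : 0 < m := by
    rcases Function.ne_iff.mp hu with ⟨i, hi⟩
    calc (0:ℝ) < ‖u i‖ := by simpa using hi
      _ ≤ m := hmax i
  have habs : |μ| ≤ 1 := by
    have h1 : ‖(μ : ℂ) * (q i0 : ℂ) * u i0‖ = |μ| * (q i0 * m) := by
      rw [norm_mul, norm_mul, Complex.norm_real, Complex.norm_real, Real.norm_eq_abs, Real.norm_eq_abs,
        abs_of_pos (hqpos i0)]
      ring
    have h2 : ‖∑ j, (A i0 j : ℂ) * u j‖ ≤ q i0 * m := by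
      calc ‖∑ j, (A i0 j : ℂ) * u j‖ ≤ ∑ j, ‖(A i0 j : ℂ) * u j‖ :=
            norm_sum_le _ _
        _ ≤ ∑ j, A i0 j * m := by
            refine Finset.sum_le_sum fun j _ => ?_
            rw [norm_mul, Complex.norm_real, Real.norm_eq_abs, abs_of_nonneg (hA0 i0 j)]
            exact mul_le_mul_of_nonneg_left (hmax j) (hA0 i0 j)
        _ = q i0 * m := by rw [← Finset.sum_mul, ← hq]
    rw [heig i0, h1] at h2
    have hqm : 0 < q i0 * m := mul_pos (hqpos i0) hm
    exact le_of_mul_le_mul_right (by linarith) hqm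
  have hμle := abs_le.mp habs
  -- μ ≠ -1 (non-bipartiteness)
  have hne1 : μ ≠ -1 := by
    intro hμ
    have hstep : ∀ i, ‖u i‖ = m → ∀ j, G.Adj i j →
        u j = -u i ∧ ‖u j‖ = m := by
      intro i hi j hij
      have heqi : ∑ j, (A i j : ℂ) * u j = ((-1 : ℝ) : ℂ) * (q i : ℂ) * u i := by
        rw [heig i, hμ]
      have huj := stmt11_step A hA0 q hq u m hm hmax (-1) (Or.inr rfl) i hi heqi j (hadj hij)
      have huj' : u j = -u i := by push_cast at huj; rw [neg_one_mul] at huj; exact huj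
      exact ⟨huj', by rw [huj', norm_neg, hi]⟩
    set Pd : Fin n → Prop := fun a => ‖u a‖ = m ∧ (u a = u i0 ∨ u a = -u i0)
      with hPd
    have hprop : ∀ a b : Fin n, G.Adj a b → Pd a → Pd b := by
      intro a b hab ⟨h1, h2⟩
      obtain ⟨hub, habsb⟩ := hstep a h1 b hab
      refine ⟨habsb, ?_⟩
      rcases h2 with h | h
      · right; rw [hub, h]
      · left; rw [hub, h, neg_neg]
    have hwalk : ∀ a b : Fin n, G.Walk a b → Pd a → Pd b := by
      intro a b w
      induction w with
      | nil => exact id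
      | cons h p ih => exact fun hpa => ih (hprop _ _ h hpa)
    have hclaim : ∀ j, Pd j := fun j =>
      hwalk i0 j (hconn i0 j).some ⟨hm'.symm, Or.inl rfl⟩
    have hni0 : u i0 ≠ -u i0 := by
      intro h
      have : u i0 = 0 := by
        have := congrArg (· + u i0) h
        simp at this
        tauto
      rw [this] at hm'
      simp at hm'
      exact hm.ne hm'.symm
    have hvalid : ∀ {a b : Fin n}, G.Adj a b →
        (if u a = u i0 then (0 : Fin 2) else 1) ≠ (if u b = u i0 then (0 : Fin 2) else 1) := by
      intro a b hab
      obtain ⟨ha1, ha2⟩ := hclaim a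
      obtain ⟨hb1, hb2⟩ := hclaim b
      have hub : u b = -u a := (hstep a ha1 b hab).1
      rcases ha2 with h | h
      · have : u b = -u i0 := by rw [hub, h]
        rw [if_pos h, if_neg (by rw [this]; exact fun hh => hni0 hh.symm)]
        exact (by decide : (0:Fin 2) ≠ 1)
      · have hbb : u b = u i0 := by rw [hub, h, neg_neg]
        rw [if_neg (by rw [h]; exact fun hh => hni0 hh.symm), if_pos hbb]
        exact (by decide : (1:Fin 2) ≠ 0)
    exact hnb (by simpa using (SimpleGraph.Coloring.mk _ hvalid).colorable)
  refine ⟨⟨lt_of_le_of_ne hμle.1 (Ne.symm hne1), hμle.2⟩, ?_⟩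
  -- μ = 1 : constancy
  intro hμ
  have hstep : ∀ i, u i = u i0 → ∀ j, G.Adj i j → u j = u i0 := by
    intro i hi j hij
    have heqi : ∑ k, (A i k : ℂ) * u k = ((1 : ℝ) : ℂ) * (q i : ℂ) * u i := by
      rw [heig i, hμ]
    have hiabs : ‖u i‖ = m := by rw [hi]
    have huj := stmt11_step A hA0 q hq u m hm hmax 1 (Or.inl rfl) i hiabs heqi j (hadj hij)
    rw [huj, hi]; push_cast; ring
  have hwalk : ∀ a b : Fin n, G.Walk a b → u a = u i0 → u b = u i0 := by
    intro a b w
    induction w with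
    | nil => exact id
    | cons h p ih => exact fun hpa => ih (hstep _ hpa _ h)
  have hconst : ∀ j, u j = u i0 := fun j => hwalk i0 j (hconn i0 j).some rfl
  intro i j
  rw [hconst i, hconst j]

/-- Convergence of the powers of the symmetrized random-walk matrix. -/
lemma stmt11_lim {n : ℕ} (A : Matrix (Fin n) (Fin n) ℝ)
    (hsym : ∀ i j, A j i = A i j) (hA0 : ∀ i j, 0 ≤ A i j)
    (q : Fin n → ℝ) (hq : ∀ i, q i = ∑ j, A i j) (hqpos : ∀ i, 0 < q i)
    (hconn : (SimpleGraph.fromRel fun i j => A i j ≠ 0).Connected)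
    (hnb : ¬ (SimpleGraph.fromRel fun i j => A i j ≠ 0).Colorable 2)
    (r : Fin n → ℝ) (hr : ∀ i, r i = Real.sqrt (q i))
    (M : Matrix (Fin n) (Fin n) ℂ) (hM : ∀ i j, M i j = ((A i j / (r i * r j) : ℝ) : ℂ)) :
    ∀ i j, Filter.Tendsto (fun t => (M ^ t) i j) Filter.atTop
      (nhds (((r i * r j / ∑ k, q k : ℝ) : ℂ))) := by
  have hne : Nonempty (Fin n) := hconn.nonempty
  have hr0 : ∀ i, 0 < r i := fun i => by rw [hr i]; exact Real.sqrt_pos.mpr (hqpos i)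
  have hr2 : ∀ i, r i * r i = q i := fun i => by
    rw [hr i]; exact Real.mul_self_sqrt (hqpos i).le
  have hrC : ∀ i, ((r i : ℝ) : ℂ) ≠ 0 := fun i => by
    rw [Ne, Complex.ofReal_eq_zero]; exact (hr0 i).ne'
  have hQpos : 0 < ∑ k, q k := Finset.sum_pos (fun k _ => hqpos k) Finset.univ_nonempty
  have hQC : ((∑ k, q k : ℝ) : ℂ) ≠ 0 := by
    rw [Ne, Complex.ofReal_eq_zero]; exact hQpos.ne'
  -- M is Hermitian
  have hherm : M.IsHermitian := by
    show Mᴴ = M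
    ext i j
    rw [Matrix.conjTranspose_apply, hM j i, hM i j]
    rw [RCLike.star_def, Complex.conj_ofReal]
    congr 1
    rw [hsym i j, mul_comm]
  set U : Matrix (Fin n) (Fin n) ℂ := (hherm.eigenvectorUnitary : Matrix (Fin n) (Fin n) ℂ)
    with hU
  set μs : Fin n → ℝ := hherm.eigenvalues with hμs
  have hUU : U * star U = 1 := Matrix.mem_unitaryGroup_iff.mp hherm.eigenvectorUnitary.2
  have hUU' : star U * U = 1 := Matrix.mem_unitaryGroup_iff'.mp hherm.eigenvectorUnitary.2
  have hspec : M = U * Matrix.diagonal (fun k => ((μs k : ℝ) : ℂ)) * star U := by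
    have := hherm.spectral_theorem
    convert this using 2
    rfl
  -- eigenvalue structure for each column
  have hcol : ∀ k i, U i k = hherm.eigenvectorBasis k i := fun k i =>
    hherm.eigenvectorUnitary_apply i k
  have hstruct : ∀ k, (-1 < μs k ∧ μs k ≤ 1) ∧
      (μs k = 1 → ∃ c : ℂ, ∀ i, U i k = c * (r i : ℂ)) := by
    intro k
    set v : Fin n → ℂ := fun i => hherm.eigenvectorBasis k i with hv
    have hvnz : v ≠ 0 := by
      intro h
      have h0 : hherm.eigenvectorBasis k = 0 := by
        apply PiLp.ext
        intro i
        exact congrFun h i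
      exact hherm.eigenvectorBasis.orthonormal.ne_zero k h0
    have hveig : ∀ i, ∑ j, M i j * v j = (μs k : ℂ) * v i := by
      intro i
      have h := congrFun (hherm.mulVec_eigenvectorBasis k) i
      simpa [Matrix.mulVec, dotProduct, Complex.real_smul, hv] using h
    set u : Fin n → ℂ := fun j => v j / (r j : ℂ) with hu'
    have hunz : u ≠ 0 := by
      intro h
      apply hvnz
      funext j
      have := congrFun h j
      simp only [hu', Pi.zero_apply, div_eq_zero_iff] at this
      rcases this with h1 | h1
      · exact h1
      · exact absurd h1 (hrC j)
    have hueig : ∀ i, ∑ j, (A i j : ℂ) * u j = (μs k : ℂ) * (q i : ℂ) * u i := by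
      intro i
      have h1 : (r i : ℂ) * ∑ j, M i j * v j = ∑ j, (A i j : ℂ) * u j := by
        rw [Finset.mul_sum]
        refine Finset.sum_congr rfl fun j _ => ?_
        have hri := hrC i
        have hrj := hrC j
        rw [hM i j, hu']
        push_cast
        field_simp
      have h2 : (r i : ℂ) * ((μs k : ℂ) * v i) = (μs k : ℂ) * (q i : ℂ) * u i := by
        rw [hu']
        have hqc : ((q i : ℝ) : ℂ) = (r i : ℂ) * (r i : ℂ) := by
          rw [← hr2 i]; push_cast; ring
        have hri := hrC i
        rw [hqc]
        field_simp
      rw [← h1, hveig i, h2]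
    obtain ⟨hb, hc⟩ := stmt11_eig A hsym hA0 q hq hqpos hconn hnb (μs k) u hunz hueig
    refine ⟨hb, fun h1 => ?_⟩
    obtain ⟨i0⟩ := hne
    refine ⟨u i0, fun i => ?_⟩
    have : u i = u i0 := hc h1 i i0
    have hvi : v i = u i * (r i : ℂ) := by
      rw [hu']; exact (div_mul_cancel₀ _ (hrC i)).symm
    rw [hcol k i]
    show v i = u i0 * (r i : ℂ)
    rw [hvi, this]
  -- orthonormality of columns
  have horth : ∀ k l, ∑ i, star (U i k) * U i l = if k = l then 1 else 0 := by
    intro k l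
    have := congrFun (congrFun hUU' k) l
    rw [Matrix.mul_apply] at this
    simp only [Matrix.star_apply] at this
    rw [this]
    rw [Matrix.one_apply]
  -- existence of the top eigenvalue
  set w : Fin n → ℂ := fun i => ((r i : ℝ) : ℂ) with hw
  have hMw : M.mulVec w = w := by
    funext i
    rw [Matrix.mulVec, dotProduct]
    have : ∀ j, M i j * w j = ((A i j / r i : ℝ) : ℂ) := by
      intro j
      have hri := (hr0 i).ne'
      have hrj := (hr0 j).ne'
      have hriC := hrC i
      have hrjC := hrC j
      rw [hM i j, hw]
      push_cast
      field_simp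
    simp only [this]
    rw [← Complex.ofReal_sum]
    rw [hw]
    congr 1
    rw [← Finset.sum_div, ← hq]
    rw [← hr2 i]
    have hri := (hr0 i).ne'
    field_simp
  have hex : ∃ k0, μs k0 = 1 := by
    set y : Fin n → ℂ := (star U).mulVec w with hy
    have hUy : U.mulVec y = w := by
      rw [hy, Matrix.mulVec_mulVec, hUU, Matrix.one_mulVec]
    have hynz : y ≠ 0 := by
      intro h
      rw [h, Matrix.mulVec_zero] at hUy
      obtain ⟨i0⟩ := hne
      have h0 := congrFun hUy i0
      have h0' : (0 : ℂ) = ((r i0 : ℝ) : ℂ) := by simpa [hw] using h0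
      exact hrC i0 h0'.symm
    have hdy : (Matrix.diagonal (fun k => ((μs k : ℝ) : ℂ))).mulVec y = y := by
      have h1 : U.mulVec ((Matrix.diagonal (fun k => ((μs k : ℝ) : ℂ))).mulVec y) = w := by
        calc U.mulVec ((Matrix.diagonal (fun k => ((μs k : ℝ) : ℂ))).mulVec y)
            = M.mulVec w := by
              rw [hy, hspec]
              simp only [Matrix.mulVec_mulVec, Matrix.mul_assoc]
          _ = w := hMw
      have h2 := congrArg (star U).mulVec h1
      rw [Matrix.mulVec_mulVec, hUU', Matrix.one_mulVec, ← hy] at h2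
      exact h2
    rcases Function.ne_iff.mp hynz with ⟨k0, hk0⟩
    refine ⟨k0, ?_⟩
    have := congrFun hdy k0
    rw [Matrix.mulVec_diagonal] at this
    have h3 : ((μs k0 : ℝ) : ℂ) = 1 := by
      have h4 : (((μs k0 : ℝ) : ℂ) - 1) * y k0 = 0 := by linear_combination this
      rcases mul_eq_zero.mp h4 with h | h
      · exact sub_eq_zero.mp h
      · exact absurd h hk0
    exact_mod_cast h3
  obtain ⟨k0, hk0⟩ := hex
  obtain ⟨c, hc⟩ := (hstruct k0).2 hk0
  have hstar : ∀ x : ℝ, star ((x : ℝ) : ℂ) = ((x : ℝ) : ℂ) := fun x => by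
    rw [RCLike.star_def, Complex.conj_ofReal]
  have hsumdiag : ∀ k, ∑ i, star (U i k) * U i k = 1 := fun k => by
    have := horth k k; rwa [if_pos rfl] at this
  have hcc : star c * c * ((∑ k, q k : ℝ) : ℂ) = 1 := by
    calc star c * c * ((∑ k, q k : ℝ) : ℂ)
        = ∑ i, star c * c * ((q i : ℝ) : ℂ) := by
          rw [Complex.ofReal_sum, Finset.mul_sum]
      _ = ∑ i, star (U i k0) * U i k0 := by
          refine Finset.sum_congr rfl fun i _ => ?_
          rw [hc i, star_mul', hstar (r i), ← hr2 i]
          push_cast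
          ring
      _ = 1 := hsumdiag k0
  have hcnz : c ≠ 0 := fun h => by rw [h] at hcc; simp at hcc
  have huniq : ∀ k, μs k = 1 → k = k0 := by
    intro k hk
    by_contra hne'
    obtain ⟨c', hc'⟩ := (hstruct k).2 hk
    have hoff := horth k k0
    rw [if_neg hne'] at hoff
    have h6 : star c' * c * ((∑ k, q k : ℝ) : ℂ) = 0 := by
      calc star c' * c * ((∑ k, q k : ℝ) : ℂ)
          = ∑ i, star c' * c * ((q i : ℝ) : ℂ) := by
            rw [Complex.ofReal_sum, Finset.mul_sum]
        _ = ∑ i, star (U i k) * U i k0 := by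
            refine Finset.sum_congr rfl fun i _ => ?_
            rw [hc i, hc' i, star_mul', hstar (r i), ← hr2 i]
            push_cast
            ring
        _ = 0 := hoff
    have h7 := (mul_eq_zero.mp h6).resolve_right hQC
    rcases mul_eq_zero.mp h7 with h | h
    · have hc'0 : c' = 0 := star_eq_zero.mp h
      have hz : ∀ i, star (U i k) * U i k = 0 := fun i => by
        simp [hc' i, hc'0]
      have hdd := hsumdiag k
      rw [Finset.sum_congr rfl (fun i _ => hz i)] at hdd
      simp at hdd
    · exact hcnz h
  -- power formula
  have hd : ∀ t : ℕ, M ^ t = U * Matrix.diagonal (fun k => ((μs k : ℝ) : ℂ) ^ t) * star U := by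
    intro t
    rw [hspec, stmt11_conj_pow U _ (star U) hUU hUU' t, Matrix.diagonal_pow]
    rfl
  have hentry : ∀ (t : ℕ) i j, (M ^ t) i j
      = ∑ k, U i k * ((μs k : ℝ) : ℂ) ^ t * star (U j k) := by
    intro t i j
    rw [hd t, Matrix.mul_apply]
    refine Finset.sum_congr rfl fun k _ => ?_
    rw [Matrix.mul_diagonal, Matrix.star_apply]
  intro i j
  have hlim : ∀ k, Filter.Tendsto (fun t => U i k * ((μs k : ℝ) : ℂ) ^ t * star (U j k))
      Filter.atTop (nhds (if μs k = 1 then U i k * star (U j k) else 0)) := by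
    intro k
    by_cases hk : μs k = 1
    · rw [if_pos hk]
      have he : ∀ t : ℕ, U i k * ((μs k : ℝ) : ℂ) ^ t * star (U j k)
          = U i k * star (U j k) := by
        intro t; rw [hk]; norm_num
      simp only [he]
      exact tendsto_const_nhds
    · rw [if_neg hk]
      have hnorm : ‖((μs k : ℝ) : ℂ)‖ < 1 := by
        rw [Complex.norm_real, Real.norm_eq_abs, abs_lt]
        obtain ⟨h1, h2⟩ := (hstruct k).1
        exact ⟨by linarith, lt_of_le_of_ne h2 hk⟩
      have h0 := tendsto_pow_atTop_nhds_zero_of_norm_lt_one hnorm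
      have h1 := (h0.const_mul (U i k)).mul_const (star (U j k))
      simpa using h1
  have hsum := tendsto_finset_sum Finset.univ (fun k (_ : k ∈ Finset.univ) => hlim k)
  have h8 : star c * c = 1 / ((∑ k, q k : ℝ) : ℂ) := eq_div_of_mul_eq hQC hcc
  have hval : (∑ k, if μs k = 1 then U i k * star (U j k) else 0)
      = ((r i * r j / ∑ k, q k : ℝ) : ℂ) := by
    rw [Finset.sum_eq_single_of_mem k0 (Finset.mem_univ k0)]
    · rw [if_pos hk0, hc i, hc j, star_mul', hstar (r j)]
      rw [show c * ((r i : ℝ) : ℂ) * (star c * ((r j : ℝ) : ℂ))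
          = star c * c * (((r i : ℝ) : ℂ) * ((r j : ℝ) : ℂ)) from by ring, h8]
      push_cast
      ring
    · intro b _ hb
      rw [if_neg (fun hh => hb (huniq b hh))]
  rw [show (fun t => (M ^ t) i j)
      = fun t => ∑ k, U i k * ((μs k : ℝ) : ℂ) ^ t * star (U j k) from
        funext fun t => hentry t i j]
  rw [← hval]
  exact hsum

/-- For a structurally balanced, connected, non-bipartite Hermitian complex-weighted graph
with `W u v = s u · conj (s v) · |W u v|`, the complex random walk `x(t+1) = P x(t)` with
`P = Q⁻¹ W` converges, from any initial `x`, to the steady state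
`x̂ j = s j · (∑ k conj (s k) q k x k) / (∑ k q k)`. -/
theorem stmt11 {n : ℕ} (W : Matrix (Fin n) (Fin n) ℂ) (hW : W.IsHermitian)
    (s : Fin n → ℂ) (hs : ∀ v, ‖s v‖ = 1)
    (hbal : ∀ u v, W u v = s u * starRingEnd ℂ (s v) * ((‖W u v‖ : ℝ) : ℂ))
    (hconn : (SimpleGraph.fromRel fun i j => W i j ≠ 0).Connected)
    (hnb : ¬ (SimpleGraph.fromRel fun i j => W i j ≠ 0).Colorable 2)
    (q : Fin n → ℝ) (hq : ∀ i, q i = ∑ j, ‖W i j‖) (hqpos : ∀ i, 0 < q i)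
    (P : Matrix (Fin n) (Fin n) ℂ) (hP : ∀ i j, P i j = W i j / (q i : ℂ))
    (x : Fin n → ℂ) :
    Filter.Tendsto (fun t => (P ^ t).mulVec x) Filter.atTop
      (nhds fun j =>
        s j * (∑ k, starRingEnd ℂ (s k) * (q k : ℂ) * x k) / (∑ k, (q k : ℂ))) := by
  have hne : Nonempty (Fin n) := hconn.nonempty
  set A : Matrix (Fin n) (Fin n) ℝ := Matrix.of fun i j => ‖W i j‖ with hA
  have hAdef : ∀ i j, A i j = ‖W i j‖ := fun i j => rfl
  have hsym : ∀ i j, A j i = A i j := by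
    intro i j
    rw [hAdef, hAdef, ← hW.apply i j, RCLike.star_def, Complex.norm_conj]
  have hA0 : ∀ i j, 0 ≤ A i j := fun i j => norm_nonneg (W i j)
  have hq' : ∀ i, q i = ∑ j, A i j := fun i => hq i
  have hGeq : (SimpleGraph.fromRel fun i j => W i j ≠ 0)
      = SimpleGraph.fromRel fun i j => A i j ≠ 0 := by
    congr 1
    funext i j
    apply propext
    constructor
    · intro h h2
      exact h (by rwa [hAdef, norm_eq_zero] at h2)
    · intro h h2
      exact h (by rw [hAdef, h2, norm_zero])
  rw [hGeq] at hconn hnb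
  set r : Fin n → ℝ := fun i => Real.sqrt (q i) with hrdef
  have hr0 : ∀ i, 0 < r i := fun i => Real.sqrt_pos.mpr (hqpos i)
  have hr2 : ∀ i, r i * r i = q i := fun i => Real.mul_self_sqrt (hqpos i).le
  have hrC : ∀ i, ((r i : ℝ) : ℂ) ≠ 0 := fun i => by
    rw [Ne, Complex.ofReal_eq_zero]; exact (hr0 i).ne'
  have hQpos : 0 < ∑ k, q k := Finset.sum_pos (fun k _ => hqpos k) Finset.univ_nonempty
  have hQC : ((∑ k, q k : ℝ) : ℂ) ≠ 0 := by
    rw [Ne, Complex.ofReal_eq_zero]; exact hQpos.ne'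
  have hq2C : ∀ i, ((q i : ℝ) : ℂ) = (r i : ℂ) * (r i : ℂ) := fun i => by
    rw [← hr2 i]; push_cast; ring
  have hsne : ∀ v, s v ≠ 0 := fun v h => by
    have := hs v; rw [h, norm_zero] at this; norm_num at this
  have hss : ∀ v, s v * starRingEnd ℂ (s v) = 1 := fun v => by
    rw [Complex.mul_conj, Complex.normSq_eq_norm_sq, hs v]; norm_num
  set M : Matrix (Fin n) (Fin n) ℂ :=
    Matrix.of fun i j => ((A i j / (r i * r j) : ℝ) : ℂ) with hMdef
  have hlim := stmt11_lim A hsym hA0 q hq' hqpos hconn hnb r (fun i => rfl) M (fun i j => rfl)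
  set E : Matrix (Fin n) (Fin n) ℂ := Matrix.diagonal (fun i => s i / (r i : ℂ)) with hE
  set F : Matrix (Fin n) (Fin n) ℂ :=
    Matrix.diagonal (fun k => (r k : ℂ) * starRingEnd ℂ (s k)) with hF
  have hentryE : ∀ i, s i / (r i : ℂ) * ((r i : ℂ) * starRingEnd ℂ (s i)) = 1 := by
    intro i
    have h1 : s i / (r i : ℂ) * ((r i : ℂ) * starRingEnd ℂ (s i))
        = s i * starRingEnd ℂ (s i) := by
      field_simp
      rw [mul_right_comm, mul_div_cancel_right₀ _ (hrC i)]
    rw [h1, hss i]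
  have hEF : E * F = 1 := by
    rw [hE, hF, Matrix.diagonal_mul_diagonal]
    rw [show (fun i => s i / (r i : ℂ) * ((r i : ℂ) * starRingEnd ℂ (s i)))
        = fun _ => (1 : ℂ) from funext fun i => hentryE i]
    exact Matrix.diagonal_one
  have hFE : F * E = 1 := by
    rw [hE, hF, Matrix.diagonal_mul_diagonal]
    rw [show (fun i => (r i : ℂ) * starRingEnd ℂ (s i) * (s i / (r i : ℂ)))
        = fun _ => (1 : ℂ) from funext fun i => by rw [← hentryE i]; ring]
    exact Matrix.diagonal_one
  have hPEMF : P = E * M * F := by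
    ext i j
    rw [hP i j, hE, hF, Matrix.mul_diagonal, Matrix.diagonal_mul]
    rw [hbal i j]
    rw [show M i j = ((A i j / (r i * r j) : ℝ) : ℂ) from rfl, hAdef i j]
    push_cast
    rw [hq2C i]
    field_simp [hrC i, hrC j]
  have hPt : ∀ t : ℕ, P ^ t = E * M ^ t * F := fun t => by
    rw [hPEMF, stmt11_conj_pow E M F hEF hFE t]
  have hcoord : ∀ (t : ℕ) (j : Fin n), (P ^ t).mulVec x j
      = ∑ k, s j / (r j : ℂ) * (M ^ t) j k * ((r k : ℂ) * starRingEnd ℂ (s k)) * x k := by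
    intro t j
    rw [hPt t, Matrix.mulVec, dotProduct]
    refine Finset.sum_congr rfl fun k _ => ?_
    rw [hE, hF, Matrix.mul_diagonal, Matrix.diagonal_mul]
  rw [tendsto_pi_nhds]
  intro j
  rw [show (fun t => (P ^ t).mulVec x j)
      = fun t => ∑ k, s j / (r j : ℂ) * (M ^ t) j k * ((r k : ℂ) * starRingEnd ℂ (s k)) * x k
      from funext fun t => hcoord t j]
  have hval : (∑ k, s j / (r j : ℂ) * (((r j * r k / ∑ l, q l : ℝ)) : ℂ)
        * ((r k : ℂ) * starRingEnd ℂ (s k)) * x k)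
      = s j * (∑ k, starRingEnd ℂ (s k) * (q k : ℂ) * x k) / (∑ k, (q k : ℂ)) := by
    rw [Finset.mul_sum, Finset.sum_div]
    refine Finset.sum_congr rfl fun k _ => ?_
    have hQC' : (∑ i, ((q i : ℝ) : ℂ)) ≠ 0 := by
      rw [← Complex.ofReal_sum]; exact hQC
    rw [hq2C k]
    push_cast
    field_simp [hrC j, hQC']
  rw [← hval]
  refine tendsto_finset_sum _ fun k _ => ?_
  exact (((hlim j k).const_mul (s j / (r j : ℂ))).mul_const
    ((r k : ℂ) * starRingEnd ℂ (s k))).mul_const (x k)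
end

section
/- Let G = (V, E) be an unweighted, undirected, connected graph and 𝒱 = {V_1, ..., V_p} a partition of its nodes. Then there exists a Hermitian complex weight matrix W supported on E ∪ {self-loops} such that, starting from any initial feature vector x(0) with Σ_k conj(s(k)) q_k x_k(0) ≠ 0, in the steady state of the complex random walk x(t+1) = (Q^{-1}W) x(t), all nodes within the same subset V_i have features of the same phase, and nodes in different subsets have features of distinct phases. -/
open Matrix Filter

lemma herm_pow_tendsto {N : ℕ} (S : Matrix (Fin N) (Fin N) ℝ) (hS : S.IsHermitian)
    (hlo : ∀ x : Fin N → ℝ, 0 ≤ x ⬝ᵥ S *ᵥ x) (hhi : ∀ x : Fin N → ℝ, x ⬝ᵥ S *ᵥ x ≤ x ⬝ᵥ x) :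
    ∃ L : Matrix (Fin N) (Fin N) ℝ,
      ∀ j k, Filter.Tendsto (fun t => (S ^ t) j k) Filter.atTop (nhds (L j k)) := by
  set U : Matrix (Fin N) (Fin N) ℝ := (hS.eigenvectorUnitary : Matrix (Fin N) (Fin N) ℝ) with hU
  set μ : Fin N → ℝ := hS.eigenvalues with hμ
  have hUU : U * star U = 1 := (Matrix.mem_unitaryGroup_iff).mp hS.eigenvectorUnitary.2
  have hUU' : star U * U = 1 := (Matrix.mem_unitaryGroup_iff').mp hS.eigenvectorUnitary.2
  have hb : ∀ i, 0 ≤ μ i ∧ μ i ≤ 1 := by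
    intro i
    set v : Fin N → ℝ := ⇑(hS.eigenvectorBasis i) with hv
    have hmv : S *ᵥ v = μ i • v := hS.mulVec_eigenvectorBasis i
    have hvne : v ≠ 0 := by
      intro h
      exact hS.eigenvectorBasis.orthonormal.ne_zero i (by ext j; exact congrFun h j)
    have hvv : 0 < v ⬝ᵥ v := by
      rcases Function.ne_iff.mp hvne with ⟨j, hj⟩
      calc (0:ℝ) < v j * v j := mul_self_pos.mpr hj
        _ ≤ ∑ i, v i * v i :=
          Finset.single_le_sum (fun i _ => mul_self_nonneg (v i)) (Finset.mem_univ j)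
        _ = v ⬝ᵥ v := rfl
    have hdot : v ⬝ᵥ S *ᵥ v = μ i * (v ⬝ᵥ v) := by
      rw [hmv, dotProduct_smul]; rfl
    constructor
    · have h := hlo v; rw [hdot] at h
      exact (mul_nonneg_iff_of_pos_right hvv).mp h
    · have h := hhi v; rw [hdot] at h
      have h' : μ i * (v ⬝ᵥ v) ≤ 1 * (v ⬝ᵥ v) := by rw [one_mul]; exact h
      exact le_of_mul_le_mul_right h' hvv
  have hspec : S = U * diagonal μ * star U := by
    have := hS.spectral_theorem
    rwa [RCLike.ofReal_real_eq_id, Function.id_comp] at this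
  have hpow : ∀ t : ℕ, S ^ t = U * diagonal (fun i => μ i ^ t) * star U := by
    intro t
    induction t with
    | zero => simp [pow_zero, Matrix.diagonal_one, hUU]
    | succ t ih =>
        rw [pow_succ, ih, hspec]
        simp only [Matrix.mul_assoc]
        rw [← Matrix.mul_assoc (star U) U (diagonal μ * star U), hUU', one_mul,
          ← Matrix.mul_assoc (diagonal fun i => μ i ^ t) (diagonal μ) (star U),
          Matrix.diagonal_mul_diagonal,
          show (fun i => μ i ^ t * μ i) = fun i => μ i ^ (t + 1) from
            funext fun i => (pow_succ _ _).symm]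
  have hentry : ∀ (f : Fin N → ℝ) (j k : Fin N),
      (U * diagonal f * star U) j k = ∑ i, U j i * f i * U k i := by
    intro f j k
    rw [Matrix.mul_apply]
    congr 1; ext i
    rw [Matrix.mul_diagonal]
    simp [Matrix.star_apply, mul_comm]
  refine ⟨Matrix.of fun j k => ∑ i, U j i * (if μ i = 1 then (1:ℝ) else 0) * U k i, ?_⟩
  intro j k
  have : ∀ t, (S ^ t) j k = ∑ i, U j i * μ i ^ t * U k i := fun t => by
    rw [hpow t, hentry]
  simp only [this, Matrix.of_apply]
  apply tendsto_finset_sum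
  intro i _
  rcases eq_or_ne (μ i) 1 with h1 | h1
  · simp only [h1, one_pow, if_pos rfl]
    exact tendsto_const_nhds
  · simp only [if_neg h1]
    have habs : |μ i| < 1 := by
      rcases hb i with ⟨h0, hle⟩
      rw [abs_of_nonneg h0]
      exact lt_of_le_of_ne hle h1
    have := (tendsto_pow_atTop_nhds_zero_of_abs_lt_one habs).const_mul (U j i)
    have := this.mul_const (U k i)
    simpa using this
lemma phase_inj {p : ℕ} (hp : 0 < p) (aq bq : ℕ) (ha : aq < p) (hb : bq < p)
    (h : Complex.exp (((2 * Real.pi * aq / p : ℝ) : ℂ) * Complex.I)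
       = Complex.exp (((2 * Real.pi * bq / p : ℝ) : ℂ) * Complex.I)) : aq = bq := by
  rw [Complex.exp_eq_exp_iff_exists_int] at h
  obtain ⟨k, hk⟩ := h
  have him := congrArg Complex.im hk
  simp [Complex.add_im, Complex.mul_im, Complex.ofReal_re, Complex.ofReal_im,
    Complex.I_re, Complex.I_im, Complex.intCast_re, Complex.intCast_im] at him
  -- him : 2 * π * aq / p = 2 * π * bq / p + k * (2 * π)  (some normal form)
  have hπ : (0:ℝ) < Real.pi := Real.pi_pos
  have hp' : (0:ℝ) < p := by exact_mod_cast hp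
  have key : (aq : ℝ) = bq + k * p := by
    field_simp at him
    have h2 : 2 * Real.pi * (aq : ℝ) = 2 * Real.pi * ((bq : ℝ) + k * p) := by rw [him]; ring
    exact mul_left_cancel₀ (by positivity : (2 * Real.pi : ℝ) ≠ 0) h2
  have hk0 : k = 0 := by
    have h1 : (k : ℝ) * p < p := by
      have : (aq : ℝ) < p := by exact_mod_cast ha
      nlinarith [Nat.cast_nonneg (α := ℝ) bq]
    have h2 : -(p : ℝ) < k * p := by
      have : (bq : ℝ) < p := by exact_mod_cast hb
      nlinarith [Nat.cast_nonneg (α := ℝ) aq]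
    have hk1 : (k : ℝ) < 1 := by
      by_contra hc
      push_neg at hc
      nlinarith
    have hk2 : (-1 : ℝ) < k := by
      by_contra hc
      push_neg at hc
      nlinarith
    have hA : (-1 : ℤ) < k := by exact_mod_cast hk2
    have hB : k < (1 : ℤ) := by exact_mod_cast hk1
    omega
  rw [hk0] at key
  simp at key
  exact_mod_cast key

set_option maxHeartbeats 2000000 in
/-- For any connected unweighted undirected graph and any partition of its nodes (given by
a surjection `σ` onto `Fin p`), there exists a Hermitian complex weight matrix supported on
the edges and self-loops such that, for every initial state `x` with
`∑ k conj (s k) q k x k ≠ 0`, the complex random walk `x(t+1) = (Q⁻¹W) x(t)` converges to a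
steady state in which nodes of the same block have the same phase and nodes of different
blocks have distinct phases. -/
theorem stmt12 {n p : ℕ} (hp : 0 < p) (G : SimpleGraph (Fin n)) (hconn : G.Connected)
    (σ : Fin n → Fin p) (hσ : Function.Surjective σ) :
    ∃ (W : Matrix (Fin n) (Fin n) ℂ) (s : Fin n → ℂ),
      W.IsHermitian ∧
      (∀ u v, u ≠ v → ¬ G.Adj u v → W u v = 0) ∧
      (∀ v, ‖s v‖ = 1) ∧
      (∀ u v, σ u = σ v ↔ s u = s v) ∧
      ∀ x : Fin n → ℂ,
        (∑ k, starRingEnd ℂ (s k) * ((∑ l, ‖W k l‖ : ℝ) : ℂ) * x k) ≠ 0 →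
        ∃ xhat : Fin n → ℂ,
          Filter.Tendsto
            (fun t =>
              ((Matrix.of fun i j => W i j / ((∑ l, ‖W i l‖ : ℝ) : ℂ)) ^ t).mulVec x)
            Filter.atTop (nhds xhat) ∧
          (∀ j, xhat j ≠ 0) ∧
          (∀ u v, σ u = σ v ↔
            xhat u / (‖xhat u‖ : ℂ) = xhat v / (‖xhat v‖ : ℂ)) := by
  classical
  obtain ⟨j0, -⟩ := hσ ⟨0, hp⟩
  haveI : Nonempty (Fin n) := ⟨j0⟩
  have hn : 0 < n := j0.pos
  -- phases
  set s : Fin n → ℂ := fun v => Complex.exp (((2 * Real.pi * (σ v).val / p : ℝ) : ℂ) * Complex.I)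
    with hs_def
  have hs_abs : ∀ v, ‖s v‖ = 1 := fun v => Complex.norm_exp_ofReal_mul_I _
  have hs_ne : ∀ v, s v ≠ 0 := by
    intro v h
    have := hs_abs v
    rw [h] at this; simp at this
  have hs_conj : ∀ v, s v * (starRingEnd ℂ) (s v) = 1 := by
    intro v
    rw [Complex.mul_conj, Complex.normSq_eq_norm_sq, hs_abs]
    norm_num
  have hsσ : ∀ u v, σ u = σ v ↔ s u = s v := by
    intro u v
    constructor
    · intro h; simp only [hs_def, h]
    · intro h
      exact Fin.ext (phase_inj hp (σ u).val (σ v).val (σ u).isLt (σ v).isLt h)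
  -- real weighted adjacency with self loops
  set a : Matrix (Fin n) (Fin n) ℝ := G.adjMatrix ℝ + (n : ℝ) • 1 with ha_def
  have hadj_symm : ∀ j k, (G.adjMatrix ℝ) j k = (G.adjMatrix ℝ) k j := by
    intro j k; simp only [SimpleGraph.adjMatrix_apply]
    by_cases h : G.Adj j k
    · rw [if_pos h, if_pos h.symm]
    · rw [if_neg h, if_neg fun hh => h hh.symm]
  have hadj_nonneg : ∀ j k, 0 ≤ (G.adjMatrix ℝ) j k := by
    intro j k; simp only [SimpleGraph.adjMatrix_apply]; split <;> norm_num
  have ha_symm : ∀ j k, a j k = a k j := by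
    intro j k
    simp only [ha_def, Matrix.add_apply, Matrix.smul_apply, smul_eq_mul]
    rw [hadj_symm]
    congr 1
    by_cases h : j = k
    · subst h; rfl
    · rw [Matrix.one_apply_ne h, Matrix.one_apply_ne fun hh => h hh.symm]
  have ha_nonneg : ∀ j k, 0 ≤ a j k := by
    intro j k
    simp only [ha_def, Matrix.add_apply, Matrix.smul_apply, smul_eq_mul, Matrix.one_apply]
    have := hadj_nonneg j k
    split <;> [positivity; simpa]
  -- degrees
  set d : Fin n → ℝ := fun j => ∑ k, a j k with hd_def
  have hdeg_row : ∀ j, ∑ k, (G.adjMatrix ℝ) j k = (G.degree j : ℝ) := by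
    intro j
    have h := G.adjMatrix_mulVec_apply (α := ℝ) j (fun _ => 1)
    simp only [Matrix.mulVec, dotProduct, mul_one] at h
    rw [h, Finset.sum_const, SimpleGraph.degree]
    simp
  have hd_eq : ∀ j, d j = (G.degree j : ℝ) + n := by
    intro j
    simp only [hd_def, ha_def, Matrix.add_apply, Finset.sum_add_distrib, hdeg_row,
      Matrix.smul_apply, smul_eq_mul]
    congr 1
    rw [← Finset.mul_sum]
    have : ∑ k, (1 : Matrix (Fin n) (Fin n) ℝ) j k = 1 := by
      simp [Matrix.one_apply]
    rw [this, mul_one]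
  have hd_pos : ∀ j, 0 < d j := by
    intro j
    rw [hd_eq]
    have h1 : (0:ℝ) ≤ (G.degree j : ℝ) := Nat.cast_nonneg _
    have h2 : (0:ℝ) < n := by exact_mod_cast hn
    linarith
  have hdc : ∀ j, (0:ℝ) < Real.sqrt (d j) := fun j => Real.sqrt_pos.mpr (hd_pos j)
  have hdsq : ∀ j, Real.sqrt (d j) * Real.sqrt (d j) = d j := fun j =>
    Real.mul_self_sqrt (hd_pos j).le
  -- the weight matrix
  set W : Matrix (Fin n) (Fin n) ℂ :=
    Matrix.of (fun j k => s j * (starRingEnd ℂ) (s k) * ((a j k : ℝ) : ℂ)) with hW_def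
  have habsW : ∀ j k, ‖W j k‖ = a j k := by
    intro j k
    simp only [hW_def, Matrix.of_apply, norm_mul, hs_abs, Complex.norm_conj, Complex.norm_real, Real.norm_eq_abs,
      one_mul, abs_of_nonneg (ha_nonneg j k)]
  have hq : ∀ j, (∑ l, ‖W j l‖) = d j := by
    intro j
    simp only [habsW, hd_def]
  refine ⟨W, s, ?_, ?_, hs_abs, hsσ, ?_⟩
  · -- Hermitian
    ext j k
    simp only [Matrix.conjTranspose_apply, hW_def, Matrix.of_apply, star_mul', _root_.map_mul,
      RingHom.id_apply, starRingEnd_self_apply, Complex.star_def]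
    rw [Complex.conj_ofReal, ha_symm k j]
    ring
  · -- support
    intro u v huv hadj
    simp only [hW_def, Matrix.of_apply, ha_def, Matrix.add_apply, Matrix.smul_apply, smul_eq_mul,
      SimpleGraph.adjMatrix_apply, if_neg hadj, Matrix.one_apply_ne huv]
    norm_num
  -- symmetrized walk matrix
  set Ssym : Matrix (Fin n) (Fin n) ℝ :=
    Matrix.of (fun j k => a j k / (Real.sqrt (d j) * Real.sqrt (d k))) with hS_def
  have hSsym_symm : ∀ j k, Ssym j k = Ssym k j := by
    intro j k
    simp only [hS_def, Matrix.of_apply]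
    rw [ha_symm j k, mul_comm]
  have hS_herm : Ssym.IsHermitian := by
    ext j k
    simp only [Matrix.conjTranspose_apply, star_trivial]
    exact (hSsym_symm j k).symm
  -- expansion lemma for adjacency double sums
  have hexp : ∀ y z : Fin n → ℝ,
      ∑ j, ∑ k, (G.adjMatrix ℝ) j k * (y j + z k) ^ 2
        = (∑ j, (G.degree j : ℝ) * y j ^ 2) + (∑ k, (G.degree k : ℝ) * z k ^ 2)
          + 2 * ∑ j, ∑ k, (G.adjMatrix ℝ) j k * (y j * z k) := by
    intro y z
    have h1 : ∀ j k, (G.adjMatrix ℝ) j k * (y j + z k) ^ 2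
        = (G.adjMatrix ℝ) j k * y j ^ 2 + (G.adjMatrix ℝ) j k * z k ^ 2
          + 2 * ((G.adjMatrix ℝ) j k * (y j * z k)) := by intro j k; ring
    have e1 : ∑ j, ∑ k, (G.adjMatrix ℝ) j k * y j ^ 2 = ∑ j, (G.degree j : ℝ) * y j ^ 2 := by
      refine Finset.sum_congr rfl fun j _ => ?_
      rw [← Finset.sum_mul, hdeg_row]
    have e2 : ∑ j, ∑ k, (G.adjMatrix ℝ) j k * z k ^ 2 = ∑ k, (G.degree k : ℝ) * z k ^ 2 := by
      rw [Finset.sum_comm]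
      refine Finset.sum_congr rfl fun k _ => ?_
      rw [← Finset.sum_mul, Finset.sum_congr rfl fun j _ => hadj_symm j k, hdeg_row]
    calc ∑ j, ∑ k, (G.adjMatrix ℝ) j k * (y j + z k) ^ 2
        = (∑ j, ∑ k, (G.adjMatrix ℝ) j k * y j ^ 2)
          + (∑ j, ∑ k, (G.adjMatrix ℝ) j k * z k ^ 2)
          + 2 * ∑ j, ∑ k, (G.adjMatrix ℝ) j k * (y j * z k) := by
          simp only [h1, Finset.sum_add_distrib, Finset.mul_sum]
      _ = _ := by rw [e1, e2]
  -- quadratic form rewrite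
  have hquad : ∀ x : Fin n → ℝ,
      x ⬝ᵥ Ssym *ᵥ x
        = (∑ j, ∑ k, (G.adjMatrix ℝ) j k * ((x j / Real.sqrt (d j)) * (x k / Real.sqrt (d k))))
          + (n : ℝ) * ∑ j, (x j / Real.sqrt (d j)) ^ 2 := by
    intro x
    have h0 : x ⬝ᵥ Ssym *ᵥ x
        = ∑ j, ∑ k, a j k * ((x j / Real.sqrt (d j)) * (x k / Real.sqrt (d k))) := by
      simp only [dotProduct, Matrix.mulVec, Finset.mul_sum]
      refine Finset.sum_congr rfl fun j _ => Finset.sum_congr rfl fun k _ => ?_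
      simp only [hS_def, Matrix.of_apply]
      field_simp
    rw [h0]
    have h1 : ∀ j k, a j k * ((x j / Real.sqrt (d j)) * (x k / Real.sqrt (d k)))
        = (G.adjMatrix ℝ) j k * ((x j / Real.sqrt (d j)) * (x k / Real.sqrt (d k)))
          + ((n : ℝ) • (1 : Matrix (Fin n) (Fin n) ℝ)) j k
            * ((x j / Real.sqrt (d j)) * (x k / Real.sqrt (d k))) := by
      intro j k
      simp only [ha_def, Matrix.add_apply]
      ring
    simp only [h1, Finset.sum_add_distrib]
    congr 1
    rw [Finset.mul_sum]
    refine Finset.sum_congr rfl fun j _ => ?_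
    rw [show ∑ k, ((n : ℝ) • (1 : Matrix (Fin n) (Fin n) ℝ)) j k
          * ((x j / Real.sqrt (d j)) * (x k / Real.sqrt (d k)))
        = ((n : ℝ) • (1 : Matrix (Fin n) (Fin n) ℝ)) j j
          * ((x j / Real.sqrt (d j)) * (x j / Real.sqrt (d j))) from ?_]
    · simp only [Matrix.smul_apply, Matrix.one_apply_eq, smul_eq_mul, mul_one]
      ring
    · rw [Finset.sum_eq_single j]
      · intro k _ hk
        simp [Matrix.one_apply_ne (Ne.symm hk)]
      · intro h; exact absurd (Finset.mem_univ j) h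
  have hdegle : ∀ j, (G.degree j : ℝ) ≤ n := by
    intro j
    have := G.degree_lt_card_verts j
    rw [Fintype.card_fin] at this
    exact_mod_cast this.le
  have hlo : ∀ x : Fin n → ℝ, 0 ≤ x ⬝ᵥ Ssym *ᵥ x := by
    intro x
    rw [hquad x]
    set y : Fin n → ℝ := fun j => x j / Real.sqrt (d j) with hy
    have h1 : 0 ≤ ∑ j, ∑ k, (G.adjMatrix ℝ) j k * (y j + y k) ^ 2 :=
      Finset.sum_nonneg fun j _ => Finset.sum_nonneg fun k _ =>
        mul_nonneg (hadj_nonneg j k) (sq_nonneg _)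
    have h2 := hexp y y
    have h3 : ∑ j, (G.degree j : ℝ) * y j ^ 2 ≤ (n : ℝ) * ∑ j, y j ^ 2 := by
      rw [Finset.mul_sum]
      exact Finset.sum_le_sum fun j _ => mul_le_mul_of_nonneg_right (hdegle j) (sq_nonneg _)
    linarith
  have hhi : ∀ x : Fin n → ℝ, x ⬝ᵥ Ssym *ᵥ x ≤ x ⬝ᵥ x := by
    intro x
    rw [hquad x]
    set y : Fin n → ℝ := fun j => x j / Real.sqrt (d j) with hy
    have h1 : 0 ≤ ∑ j, ∑ k, (G.adjMatrix ℝ) j k * (y j + (-y) k) ^ 2 :=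
      Finset.sum_nonneg fun j _ => Finset.sum_nonneg fun k _ =>
        mul_nonneg (hadj_nonneg j k) (sq_nonneg _)
    have h2 := hexp y (-y)
    have h3 : ∑ k, (G.degree k : ℝ) * (-y) k ^ 2 = ∑ k, (G.degree k : ℝ) * y k ^ 2 := by
      refine Finset.sum_congr rfl fun k _ => ?_; simp [neg_sq]
    have h4 : ∑ j, ∑ k, (G.adjMatrix ℝ) j k * (y j * (-y) k)
        = -∑ j, ∑ k, (G.adjMatrix ℝ) j k * (y j * y k) := by
      rw [← Finset.sum_neg_distrib]
      refine Finset.sum_congr rfl fun j _ => ?_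
      rw [← Finset.sum_neg_distrib]
      refine Finset.sum_congr rfl fun k _ => ?_
      simp only [Pi.neg_apply]; ring
    have hxx : x ⬝ᵥ x = ∑ j, d j * y j ^ 2 := by
      simp only [dotProduct, hy]
      refine Finset.sum_congr rfl fun j _ => ?_
      rw [div_pow, Real.sq_sqrt (hd_pos j).le, mul_div_cancel₀ _ (hd_pos j).ne', sq]
    rw [hxx]
    have h5 : ∑ j, d j * y j ^ 2
        = (∑ j, (G.degree j : ℝ) * y j ^ 2) + (n : ℝ) * ∑ j, y j ^ 2 := by
      rw [Finset.mul_sum, ← Finset.sum_add_distrib]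
      refine Finset.sum_congr rfl fun j _ => ?_
      rw [hd_eq j]; ring
    rw [h5]
    linarith
  obtain ⟨L, hLt⟩ := herm_pow_tendsto Ssym hS_herm hlo hhi
  -- invariance of the limit
  have hshift : ∀ j k, Filter.Tendsto (fun t => (Ssym ^ (t + 1)) j k) Filter.atTop (nhds (L j k)) :=
    fun j k => (hLt j k).comp (tendsto_add_atTop_nat 1)
  have hSL : ∀ j k, ∑ i, Ssym j i * L i k = L j k := by
    intro j k
    have h2 : Filter.Tendsto (fun t => ∑ i, Ssym j i * (Ssym ^ t) i k) Filter.atTop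
        (nhds (∑ i, Ssym j i * L i k)) :=
      tendsto_finset_sum _ fun i _ => (hLt i k).const_mul _
    have h3 : ∀ t, ∑ i, Ssym j i * (Ssym ^ t) i k = (Ssym ^ (t + 1)) j k := by
      intro t
      rw [pow_succ', Matrix.mul_apply]
    exact tendsto_nhds_unique (h2.congr h3) (hshift j k)
  have hLS : ∀ j k, ∑ i, L j i * Ssym i k = L j k := by
    intro j k
    have h2 : Filter.Tendsto (fun t => ∑ i, (Ssym ^ t) j i * Ssym i k) Filter.atTop
        (nhds (∑ i, L j i * Ssym i k)) :=
      tendsto_finset_sum _ fun i _ => (hLt j i).mul_const _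
    have h3 : ∀ t, ∑ i, (Ssym ^ t) j i * Ssym i k = (Ssym ^ (t + 1)) j k := by
      intro t
      rw [pow_succ, Matrix.mul_apply]
    exact tendsto_nhds_unique (h2.congr h3) (hshift j k)
  -- the Perron vector
  set vsq : Fin n → ℝ := fun j => Real.sqrt (d j) with hvsq_def
  have hvpos : ∀ j, 0 < vsq j := by intro j; rw [hvsq_def]; exact hdc j
  have hvne : ∀ j, vsq j ≠ 0 := fun j => (hvpos j).ne'
  have hvsq2 : ∀ j, vsq j * vsq j = d j := by intro j; rw [hvsq_def]; exact hdsq j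
  have hSv : ∀ j, ∑ k, Ssym j k * vsq k = vsq j := by
    intro j
    have h1 : ∀ k, Ssym j k * vsq k = a j k / Real.sqrt (d j) := by
      intro k
      simp only [hS_def, Matrix.of_apply, hvsq_def]
      rw [div_mul_eq_mul_div, mul_div_mul_right _ _ (hdc k).ne']
    rw [Finset.sum_congr rfl fun k _ => h1 k, ← Finset.sum_div]
    rw [show ∑ k, a j k = d j from rfl, hvsq_def, Real.div_sqrt]
  have hStv : ∀ t j, ∑ k, (Ssym ^ t) j k * vsq k = vsq j := by
    intro t
    induction t with
    | zero =>
        intro j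
        simp [Matrix.one_apply]
    | succ t ih =>
        intro j
        have h1 : ∀ k, (Ssym ^ (t + 1)) j k = ∑ i, Ssym j i * (Ssym ^ t) i k := by
          intro k; rw [pow_succ', Matrix.mul_apply]
        simp only [h1, Finset.sum_mul]
        rw [Finset.sum_comm]
        have h2 : ∀ i, ∑ k, Ssym j i * (Ssym ^ t) i k * vsq k = Ssym j i * vsq i := by
          intro i
          rw [show (∑ k, Ssym j i * (Ssym ^ t) i k * vsq k)
              = Ssym j i * ∑ k, (Ssym ^ t) i k * vsq k from by
            rw [Finset.mul_sum]; exact Finset.sum_congr rfl fun k _ => by ring]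
          rw [ih i]
        rw [Finset.sum_congr rfl fun i _ => h2 i]
        exact hSv j
  have hLv : ∀ j, ∑ k, L j k * vsq k = vsq j := by
    intro j
    have h2 : Filter.Tendsto (fun t => ∑ k, (Ssym ^ t) j k * vsq k) Filter.atTop
        (nhds (∑ k, L j k * vsq k)) :=
      tendsto_finset_sum _ fun k _ => (hLt j k).mul_const _
    have h3 : Filter.Tendsto (fun _ : ℕ => vsq j) Filter.atTop (nhds (vsq j)) :=
      tendsto_const_nhds
    exact tendsto_nhds_unique (h2.congr fun t => hStv t j) h3
  -- fixed vectors of Ssym are multiples of vsq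
  have hfix : ∀ y : Fin n → ℝ, (∀ j, ∑ k, Ssym j k * y k = y j) →
      ∀ i j, y i / vsq i = y j / vsq j := by
    intro y hy i j
    set z : Fin n → ℝ := fun j => y j / vsq j with hz_def
    have hyz : ∀ k, y k = vsq k * z k := by
      intro k
      show y k = vsq k * (y k / vsq k)
      rw [mul_comm, div_mul_cancel₀ _ (hvne k)]
    have hlz : ∀ v, (G.lapMatrix ℝ *ᵥ z) v = 0 := by
      intro v
      have h1 : ∑ k, a v k * z k = d v * z v := by
        have hv := hy v
        have h2 : ∀ k, Ssym v k * y k = a v k * z k / vsq v := by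
          intro k
          simp only [hS_def, Matrix.of_apply, hz_def, hvsq_def]
          field_simp
        rw [Finset.sum_congr rfl fun k _ => h2 k, ← Finset.sum_div] at hv
        have h3 : ∑ k, a v k * z k = y v * vsq v := by
          rw [← hv, div_mul_cancel₀ _ (hdc v).ne']
        rw [h3, hyz v]
        rw [show vsq v * z v * vsq v = (vsq v * vsq v) * z v from by ring, hvsq_def, hdsq v]
      have h3 : ∑ k, a v k * z k = (∑ k, (G.adjMatrix ℝ) v k * z k) + (n : ℝ) * z v := by
        simp only [ha_def, Matrix.add_apply, add_mul, Finset.sum_add_distrib]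
        congr 1
        rw [Finset.sum_eq_single v]
        · simp
        · intro k _ hk
          simp [Matrix.one_apply_ne (Ne.symm hk)]
        · intro h; exact absurd (Finset.mem_univ v) h
      have h4 : ∑ k, (G.adjMatrix ℝ) v k * z k = (G.degree v : ℝ) * z v := by
        have := hd_eq v
        have h5 : (∑ k, (G.adjMatrix ℝ) v k * z k) + (n : ℝ) * z v = d v * z v := by
          rw [← h3, h1]
        rw [hd_eq v] at h5
        nlinarith [h5]
      rw [SimpleGraph.lapMatrix_mulVec_apply]
      have h5 : ∑ u ∈ G.neighborFinset v, z u = ∑ k, (G.adjMatrix ℝ) v k * z k := by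
        rw [← G.adjMatrix_mulVec_apply]
        rfl
      rw [h5, h4]
      ring
    have hker : Matrix.toLin' (G.lapMatrix ℝ) z = 0 := by
      rw [Matrix.toLin'_apply]
      funext v
      exact hlz v
    exact (SimpleGraph.lapMatrix_mulVec_eq_zero_iff_forall_reachable (G := G)).mp
      (by rwa [Matrix.toLin'_apply] at hker) i j
      (hconn.preconnected i j)
  -- identify the limit
  set m2 : ℝ := ∑ k, d k with hm2_def
  have hm2 : 0 < m2 := Finset.sum_pos (fun k _ => hd_pos k) Finset.univ_nonempty
  have hLval : ∀ j k, L j k = vsq j * vsq k / m2 := by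
    have hcol : ∀ k i j, L i k / vsq i = L j k / vsq j := fun k =>
      hfix (fun i => L i k) (fun j => by
        show (∑ i, Ssym j i * L i k) = L j k
        exact hSL j k)
    have hrow : ∀ j i k, L j i / vsq i = L j k / vsq k := fun j =>
      hfix (fun k => L j k) (fun k => by
        show (∑ i, Ssym k i * L j i) = L j k
        rw [← hLS j k]
        exact Finset.sum_congr rfl fun i _ => by rw [hSsym_symm k i]; ring)
    set α : ℝ := L j0 j0 / (vsq j0 * vsq j0) with hα_def
    have hform : ∀ j k, L j k = α * (vsq j * vsq k) := by
      intro j k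
      have h1 := hcol k j j0
      have h2 := hrow j0 k j0
      rw [div_eq_div_iff (hvne j) (hvne j0)] at h1
      rw [div_eq_div_iff (hvne k) (hvne j0)] at h2
      rw [hα_def, div_mul_eq_mul_div, eq_div_iff (mul_ne_zero (hvne j0) (hvne j0))]
      linear_combination vsq j0 * h1 + vsq j * h2
    have hα1 : α * m2 = 1 := by
      have h1 := hLv j0
      rw [Finset.sum_congr rfl fun k _ => by rw [hform j0 k]] at h1
      have h2 : ∑ k, α * (vsq j0 * vsq k) * vsq k = α * vsq j0 * m2 := by
        rw [hm2_def, Finset.mul_sum]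
        exact Finset.sum_congr rfl fun k _ => by
          rw [show α * (vsq j0 * vsq k) * vsq k = α * vsq j0 * (vsq k * vsq k) from by ring,
            hvsq2 k]
      rw [h2] at h1
      have h3 : vsq j0 * (α * m2) = vsq j0 * 1 := by
        rw [mul_one]
        linear_combination h1
      exact mul_left_cancel₀ (hvne j0) h3
    intro j k
    rw [hform j k, eq_div_iff hm2.ne']
    linear_combination vsq j * vsq k * hα1
  -- the real random walk matrix
  set Pr : Matrix (Fin n) (Fin n) ℝ := Matrix.of (fun j k => a j k / d j) with hPr_def
  have hPrS : ∀ t j k, (Pr ^ t) j k = (vsq j)⁻¹ * ((Ssym ^ t) j k * vsq k) := by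
    intro t
    induction t with
    | zero =>
        intro j k
        by_cases h : j = k
        · subst h
          simp [Matrix.one_apply_eq, (hvne j)]
        · simp [Matrix.one_apply_ne h]
    | succ t ih =>
        intro j k
        have hPone : ∀ i k, Pr i k = (vsq i)⁻¹ * (Ssym i k * vsq k) := by
          intro i k
          simp only [hPr_def, hS_def, Matrix.of_apply, hvsq_def]
          rw [← hdsq i]
          field_simp
          rw [Real.sq_sqrt (sq_nonneg _), mul_div_mul_right _ _ (hdc k).ne']
        rw [pow_succ, Matrix.mul_apply]
        rw [Finset.sum_congr rfl fun i _ => by rw [ih j i, hPone i k]]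
        rw [show (∑ i, (vsq j)⁻¹ * ((Ssym ^ t) j i * vsq i) * ((vsq i)⁻¹ * (Ssym i k * vsq k)))
            = (vsq j)⁻¹ * ((∑ i, (Ssym ^ t) j i * Ssym i k) * vsq k) from by
          rw [Finset.sum_mul, Finset.mul_sum]
          exact Finset.sum_congr rfl fun i _ => by
            rw [show (vsq j)⁻¹ * ((Ssym ^ t) j i * vsq i) * ((vsq i)⁻¹ * (Ssym i k * vsq k))
                = (vsq i * (vsq i)⁻¹) * ((vsq j)⁻¹ * ((Ssym ^ t) j i * Ssym i k * vsq k)) from by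
                  ring,
              mul_inv_cancel₀ (hvne i), one_mul]]
        rw [← Matrix.mul_apply, ← pow_succ]
  have hPrt : ∀ j k, Filter.Tendsto (fun t => (Pr ^ t) j k) Filter.atTop (nhds (d k / m2)) := by
    intro j k
    have h1 := ((hLt j k).mul_const (vsq k)).const_mul (vsq j)⁻¹
    have h2 : (vsq j)⁻¹ * (L j k * vsq k) = d k / m2 := by
      have h3 : (vsq j)⁻¹ * (vsq j * vsq k / m2 * vsq k)
          = (vsq j)⁻¹ * vsq j * (vsq k * vsq k) / m2 := by ring
      rw [hLval j k, h3, inv_mul_cancel₀ (hvne j), one_mul, hvsq2 k]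
    rw [← h2]
    exact h1.congr fun t => (hPrS t j k).symm
  -- complex side
  intro x hx
  simp only [hq] at hx
  set M : Matrix (Fin n) (Fin n) ℂ :=
    Matrix.of (fun i j => W i j / ((∑ l, ‖W i l‖ : ℝ) : ℂ)) with hM_def
  have hMe : ∀ i j, M i j = s i * (starRingEnd ℂ) (s j) * ((Pr i j : ℝ) : ℂ) := by
    intro i j
    simp only [hM_def, Matrix.of_apply, hq]
    simp only [hW_def, Matrix.of_apply, hPr_def]
    push_cast
    ring
  have hMt : ∀ t i j, (M ^ t) i j = s i * (starRingEnd ℂ) (s j) * (((Pr ^ t) i j : ℝ) : ℂ) := by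
    intro t
    induction t with
    | zero =>
        intro i j
        by_cases h : i = j
        · subst h
          simp only [pow_zero, Matrix.one_apply_eq, Complex.ofReal_one, mul_one]
          exact (hs_conj i).symm
        · simp [pow_zero, Matrix.one_apply_ne h]
    | succ t ih =>
        intro i j
        rw [pow_succ, Matrix.mul_apply]
        rw [show (∑ l, (M ^ t) i l * M l j)
            = ∑ l, s i * (starRingEnd ℂ) (s j) * ((((Pr ^ t) i l * Pr l j : ℝ)) : ℂ) from
          Finset.sum_congr rfl fun l _ => by
            rw [ih i l, hMe l j]
            push_cast
            linear_combination (s i * (starRingEnd ℂ) (s j) * (((Pr ^ t) i l : ℝ) : ℂ)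
              * ((Pr l j : ℝ) : ℂ)) * hs_conj l]
        rw [← Finset.mul_sum, ← Complex.ofReal_sum,
          show (∑ l, (Pr ^ t) i l * Pr l j) = (Pr ^ (t + 1)) i j from by
            rw [pow_succ, Matrix.mul_apply]]
  set c : ℂ := ∑ k, (starRingEnd ℂ) (s k) * ((d k : ℝ) : ℂ) * x k with hc_def
  have hc : c ≠ 0 := hx
  have hm2c : ((m2 : ℝ) : ℂ) ≠ 0 := Complex.ofReal_ne_zero.mpr hm2.ne'
  refine ⟨fun j => s j * c / ((m2 : ℝ) : ℂ), ?_, ?_, ?_⟩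
  · rw [tendsto_pi_nhds]
    intro j
    have hterm : ∀ k : Fin n, Filter.Tendsto (fun t => (M ^ t) j k * x k) Filter.atTop
        (nhds (s j * (starRingEnd ℂ) (s k) * ((d k / m2 : ℝ) : ℂ) * x k)) := by
      intro k
      have h1 : Filter.Tendsto (fun t => (((Pr ^ t) j k : ℝ) : ℂ)) Filter.atTop
          (nhds ((d k / m2 : ℝ) : ℂ)) :=
        (Complex.continuous_ofReal.tendsto _).comp (hPrt j k)
      have h2 := (h1.const_mul (s j * (starRingEnd ℂ) (s k))).mul_const (x k)
      exact h2.congr fun t => by rw [hMt t j k]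
    have hsum := tendsto_finset_sum Finset.univ (fun k (_ : k ∈ Finset.univ) => hterm k)
    have hval : (∑ k, s j * (starRingEnd ℂ) (s k) * ((d k / m2 : ℝ) : ℂ) * x k)
        = s j * c / ((m2 : ℝ) : ℂ) := by
      rw [hc_def, Finset.mul_sum, Finset.sum_div]
      push_cast
      exact Finset.sum_congr rfl fun k _ => by ring
    rw [← hval]
    exact hsum.congr fun t => rfl
  · intro j
    exact div_ne_zero (mul_ne_zero (hs_ne j) hc) hm2c
  · intro u v
    have habsc : ((‖c‖ : ℝ) : ℂ) ≠ 0 :=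
      Complex.ofReal_ne_zero.mpr (norm_ne_zero_iff.mpr hc)
    have habs : ∀ w : Fin n, ‖s w * c / ((m2 : ℝ) : ℂ)‖ = ‖c‖ / m2 := by
      intro w
      rw [norm_div, norm_mul, hs_abs, one_mul, Complex.norm_of_nonneg hm2.le]
    have hphase : ∀ w : Fin n,
        (s w * c / ((m2 : ℝ) : ℂ)) / ((‖s w * c / ((m2 : ℝ) : ℂ)‖ : ℝ) : ℂ)
          = s w * (c / ((‖c‖ : ℝ) : ℂ)) := by
      intro w
      rw [habs w]
      push_cast
      field_simp
    show σ u = σ v ↔ (s u * c / ((m2 : ℝ) : ℂ)) / ((‖s u * c / ((m2 : ℝ) : ℂ)‖ : ℝ) : ℂ)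
      = (s v * c / ((m2 : ℝ) : ℂ)) / ((‖s v * c / ((m2 : ℝ) : ℂ)‖ : ℝ) : ℂ)
    rw [hphase u, hphase v, hsσ u v]
    have hw : c / ((‖c‖ : ℝ) : ℂ) ≠ 0 := div_ne_zero hc habsc
    exact ⟨fun h => by rw [h], fun h => mul_right_cancel₀ hw h⟩
end

section
/- Let G be a finite graph with node features x_i ∈ ℂ^f such that the pairs (x_i, x_j) are distinct for distinct ordered edges (v_i, v_j) ∈ E. Then for any Hermitian complex weight matrix W supported on E, there exists a function Φ of the form Φ(x_i, x_j) = σ̃(V[x_i ‖ x_j]) for (i ≤ j), and the complex conjugate for i > j, realized by an MLP with sufficient capacity, such that Φ(x_i, x_j) = W_ij for all edges, up to arbitrarily small uniform error. -/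
open Filter MeasureTheory Convolution Polynomial Topology RealInnerProductSpace

/-- A one-hidden-layer network (MLP) on a pair of complex feature vectors, interpreted as
real vectors via real and imaginary parts; the two real outputs are identified with a
complex number. -/
noncomputable def mlpNet {N f : ℕ} (σact : ℝ → ℝ) (A1 A2 A3 A4 : Fin N → Fin f → ℝ)
    (bb : Fin N → ℝ) (cc : Fin N → Fin 2 → ℝ) (a b : Fin f → ℂ) : ℂ :=
  ((∑ t, cc t 0 * σact ((∑ s, (A1 t s * (a s).re + A2 t s * (a s).im +
      A3 t s * (b s).re + A4 t s * (b s).im)) + bb t) : ℝ) : ℂ) +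
  ((∑ t, cc t 1 * σact ((∑ s, (A1 t s * (a s).re + A2 t s * (a s).im +
      A3 t s * (b s).re + A4 t s * (b s).im)) + bb t) : ℝ) : ℂ) * Complex.I


lemma myLe (m : ℕ) : (m : WithTop ℕ∞) < ((⊤:ℕ∞) : WithTop ℕ∞) :=
  WithTop.coe_lt_coe.mpr (WithTop.coe_lt_top m)

lemma myDiffIter (f : ℝ → ℝ) (hf : ContDiff ℝ (⊤:ℕ∞) f) (m : ℕ) :
    Differentiable ℝ (iteratedDeriv m f) :=
  hf.differentiable_iteratedDeriv m (myLe m)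

lemma myContDiffIter (f : ℝ → ℝ) (hf : ContDiff ℝ (⊤:ℕ∞) f) (m : ℕ) :
    ContDiff ℝ (⊤:ℕ∞) (iteratedDeriv m f) := by
  induction m with
  | zero => simpa [iteratedDeriv_zero] using hf
  | succ m ih => rw [iteratedDeriv_succ]; exact (contDiff_infty_iff_deriv.mp ih).2

lemma iterDeriv_sum {ι : Type*} (s : Finset ι) (f : ι → ℝ → ℝ)
    (h : ∀ i ∈ s, ContDiff ℝ (⊤:ℕ∞) (f i)) (m : ℕ) :
    iteratedDeriv m (fun x => ∑ i ∈ s, f i x) = fun x => ∑ i ∈ s, iteratedDeriv m (f i) x := by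
  induction m with
  | zero => simp
  | succ m ih =>
    funext x
    rw [iteratedDeriv_succ, ih,
      deriv_fun_sum (fun i hi => (myDiffIter _ (h i hi) m).differentiableAt)]
    exact Finset.sum_congr rfl fun i hi => by rw [iteratedDeriv_succ]

lemma iterDeriv_cmul (c : ℝ) (f : ℝ → ℝ) (hf : ContDiff ℝ (⊤:ℕ∞) f) (m : ℕ) (x : ℝ) :
    iteratedDeriv m (fun y => c * f y) x = c * iteratedDeriv m f x := by
  have := iteratedDerivWithin_const_smul (𝕜 := ℝ) (s := Set.univ) (f := f) (n := m)
    (Set.mem_univ x) uniqueDiffOn_univ c ((hf.of_le (le_of_lt (myLe m))).contDiffWithinAt)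
  simpa [iteratedDerivWithin_univ, smul_eq_mul] using this

lemma iterDeriv_affine (g : ℝ → ℝ) (hg : ContDiff ℝ (⊤:ℕ∞) g) (t b : ℝ) (m : ℕ) :
    iteratedDeriv m (fun a => g (t * a + b)) 0 = t ^ m * iteratedDeriv m g b := by
  have h1 : ContDiff ℝ (⊤:ℕ∞) (fun z => g (z + b)) := hg.comp (contDiff_id.add contDiff_const)
  have h2 : (fun a : ℝ => g (t * a + b)) = fun a => (fun z => g (z + b)) (t * a) := by
    funext a; rfl
  rw [h2, iteratedDeriv_comp_const_mul (h1.of_le (le_of_lt (myLe m))) t]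
  simp [iteratedDeriv_comp_add_const m g b]

lemma myAntideriv (p : Polynomial ℝ) (c0 : ℝ) (m : ℕ) (hdeg : p.degree < m) :
    ∃ P : Polynomial ℝ, P.derivative = p ∧ P.degree < (m+1 : ℕ) ∧ P.eval 0 = c0 := by
  refine ⟨(p.sum fun n a => C (a / (n+1)) * X^(n+1)) + C c0, ?_, ?_, ?_⟩
  · rw [derivative_add, derivative_C, add_zero]
    rw [Polynomial.sum, map_sum]
    conv_rhs => rw [← p.sum_C_mul_X_pow_eq]
    rw [Polynomial.sum]
    refine Finset.sum_congr rfl fun n hn => ?_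
    rw [derivative_C_mul_X_pow]
    have h0 : (n:ℝ) + 1 ≠ 0 := by positivity
    rw [Nat.add_sub_cancel]
    push_cast
    rw [div_mul_cancel₀ _ h0]
  · have hb : (⊥ : WithBot ℕ) < ((m+1 : ℕ) : WithBot ℕ) := WithBot.bot_lt_coe _
    refine lt_of_le_of_lt (degree_add_le _ _) (max_lt ?_ ?_)
    · refine lt_of_le_of_lt (degree_sum_le _ _) ?_
      rw [Finset.sup_lt_iff hb]
      intro n hn
      refine lt_of_le_of_lt (degree_C_mul_X_pow_le _ _) ?_
      have h1 : (n : WithBot ℕ) < (m : WithBot ℕ) :=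
        lt_of_le_of_lt (le_degree_of_mem_supp n hn) hdeg
      have h2 : n < m := by exact_mod_cast h1
      exact_mod_cast Nat.add_lt_add_right h2 1
    · exact lt_of_le_of_lt degree_C_le (by exact_mod_cast Nat.zero_lt_succ m)
  · simp [Polynomial.sum, eval_finset_sum]

lemma myLeW (m : ℕ) : (m : WithTop ℕ∞) < ((⊤:ℕ∞) : WithTop ℕ∞) :=
  WithTop.coe_lt_coe.mpr (WithTop.coe_lt_top m)

lemma poly_of_iter (m : ℕ) : ∀ (g : ℝ → ℝ), ContDiff ℝ (⊤:ℕ∞) g →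
    (∀ x, iteratedDeriv m g x = 0) →
    ∃ p : Polynomial ℝ, p.degree < m ∧ ∀ x, g x = p.eval x := by
  induction m with
  | zero =>
    intro g _ h
    exact ⟨0, by simp [degree_zero, WithBot.bot_lt_coe], fun x => by
      simpa [iteratedDeriv_zero] using h x⟩
  | succ m ih =>
    intro g hg h
    have hd : ContDiff ℝ (⊤:ℕ∞) (deriv g) := (contDiff_infty_iff_deriv.mp hg).2
    have h' : ∀ x, iteratedDeriv m (deriv g) x = 0 := by
      intro x
      have := h x
      rwa [iteratedDeriv_succ'] at this
    obtain ⟨p, hpdeg, hp⟩ := ih (deriv g) hd h'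
    obtain ⟨P, hPd, hPdeg, hP0⟩ := myAntideriv p (g 0) m hpdeg
    refine ⟨P, hPdeg, ?_⟩
    have hder : ∀ x, deriv (fun y => g y - P.eval y) x = 0 := by
      intro x
      rw [deriv_fun_sub (hg.differentiable (by simp)).differentiableAt
        (P.differentiable.differentiableAt), Polynomial.deriv, hPd, hp, sub_self]
    have hconst := is_const_of_deriv_eq_zero (𝕜 := ℝ)
      (f := fun y => g y - P.eval y)
      ((hg.differentiable (by simp)).sub P.differentiable) hder
    intro x
    have := hconst x 0
    simp only [hP0] at this
    linarith [this]

noncomputable def myBump (q : ℕ) : ContDiffBump (0:ℝ) :=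
  ⟨(q+2:ℝ)⁻¹, (q+1:ℝ)⁻¹, by positivity, by
    apply inv_strictAnti₀ <;> [positivity; linarith]⟩

noncomputable def myG (σ : ℝ → ℝ) (q : ℕ) : ℝ → ℝ :=
  (myBump q).normed volume ⋆[ContinuousLinearMap.lsmul ℝ ℝ, volume] σ

lemma myG_eq (σ : ℝ → ℝ) (q : ℕ) (x : ℝ) :
    myG σ q x = ∫ y, (myBump q).normed volume y • σ (x - y) := by
  rw [myG, convolution_def]; rfl

lemma transfer (σ : ℝ → ℝ) (hc : Continuous σ) {k : ℕ} (t lam : Fin k → ℝ)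
    (h : ∀ a b : ℝ, ∑ i, lam i * σ (t i * a + b) = 0) (q : ℕ) :
    ∀ a b : ℝ, ∑ i, lam i * myG σ q (t i * a + b) = 0 := by
  intro a b
  have hint : ∀ c : ℝ, Integrable (fun y => (myBump q).normed volume y • σ (c - y)) volume := by
    intro c
    apply Continuous.integrable_of_hasCompactSupport
    · exact ((myBump q).continuous_normed.smul (hc.comp (continuous_const.sub continuous_id)))
    · exact ((myBump q).hasCompactSupport_normed).smul_right
  calc ∑ i, lam i * myG σ q (t i * a + b)
      = ∑ i, ∫ y, lam i * ((myBump q).normed volume y • σ (t i * a + b - y)) := by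
        refine Finset.sum_congr rfl fun i _ => ?_
        rw [myG_eq, ← MeasureTheory.integral_const_mul]
    _ = ∫ y, ∑ i, lam i * ((myBump q).normed volume y • σ (t i * a + b - y)) := by
        rw [integral_finset_sum]
        intro i _
        exact (hint (t i * a + b)).const_mul _
    _ = ∫ y, (myBump q).normed volume y * ∑ i, lam i * σ (t i * a + (b - y)) := by
        congr 1; funext y
        rw [Finset.mul_sum]
        refine Finset.sum_congr rfl fun i _ => ?_
        simp only [smul_eq_mul]
        ring_nf
    _ = 0 := by simp [h a]

lemma not_annihilate (σ : ℝ → ℝ) (hc : Continuous σ)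
    (hnp : ¬∃ p : Polynomial ℝ, ∀ x, σ x = p.eval x)
    {k : ℕ} (t lam : Fin k → ℝ) (ht : Function.Injective t) (hlam : lam ≠ 0)
    (h : ∀ a b : ℝ, ∑ i, lam i * σ (t i * a + b) = 0) : False := by
  -- a nonzero moment
  obtain ⟨m, hmk, hmom⟩ : ∃ m : ℕ, m < k ∧ ∑ i, lam i * t i ^ m ≠ 0 := by
    by_contra hcon
    push_neg at hcon
    apply hlam
    refine Matrix.eq_zero_of_forall_pow_sum_mul_pow_eq_zero (f := t) ht fun j => ?_
    exact hcon j j.isLt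
  -- smooth mollifications
  have hgsm : ∀ q, ContDiff ℝ (⊤:ℕ∞) (myG σ q) := fun q =>
    HasCompactSupport.contDiff_convolution_left _ (myBump q).hasCompactSupport_normed
      (myBump q).contDiff_normed hc.locallyIntegrable
  have htr := transfer σ hc t lam h
  -- vanishing m-th derivative of each mollification
  have hvan : ∀ q b, iteratedDeriv m (myG σ q) b = 0 := by
    intro q b
    have haff : ∀ i : Fin k, ContDiff ℝ (⊤:ℕ∞) (fun a : ℝ => t i * a + b) := by
      intro i; fun_prop
    have hcomp : ∀ i : Fin k, ContDiff ℝ (⊤:ℕ∞) (fun a => myG σ q (t i * a + b)) :=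
      fun i => (hgsm q).comp (haff i)
    have hcd : ∀ i : Fin k, ContDiff ℝ (⊤:ℕ∞) (fun a => lam i * myG σ q (t i * a + b)) :=
      fun i => contDiff_const.mul (hcomp i)
    have h0 : iteratedDeriv m (fun a => ∑ i, lam i * myG σ q (t i * a + b)) 0 = 0 := by
      have hz : (fun a => ∑ i, lam i * myG σ q (t i * a + b)) = fun _ => (0:ℝ) := by
        funext a; exact htr q a b
      rw [hz]
      have : ∀ mm : ℕ, iteratedDeriv mm (fun _ : ℝ => (0:ℝ)) = fun _ => (0:ℝ) := by
        intro mm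
        induction mm with
        | zero => rfl
        | succ mm ih => rw [iteratedDeriv_succ, ih]; funext y; simp
      rw [this m]
    rw [iterDeriv_sum Finset.univ _ (fun i _ => hcd i)] at h0
    have h0' : ∑ i, iteratedDeriv m (fun a => lam i * myG σ q (t i * a + b)) 0 = 0 := h0
    have hrw : ∀ i : Fin k,
        iteratedDeriv m (fun a => lam i * myG σ q (t i * a + b)) 0
          = lam i * (t i ^ m * iteratedDeriv m (myG σ q) b) := by
      intro i
      calc iteratedDeriv m (fun a => lam i * myG σ q (t i * a + b)) 0
          = lam i * iteratedDeriv m (fun a => myG σ q (t i * a + b)) 0 :=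
            iterDeriv_cmul (lam i) (fun a => myG σ q (t i * a + b)) (hcomp i) m 0
        _ = lam i * (t i ^ m * iteratedDeriv m (myG σ q) b) := by
            rw [iterDeriv_affine _ (hgsm q) (t i) b m]
    rw [Finset.sum_congr rfl (fun i _ => hrw i)] at h0'
    have hmul : (∑ i, lam i * t i ^ m) * iteratedDeriv m (myG σ q) b = 0 := by
      rw [Finset.sum_mul, ← h0']
      refine Finset.sum_congr rfl fun i _ => by ring
    exact (mul_eq_zero.mp hmul).resolve_left hmom
  -- each mollification is a polynomial of degree < m
  have hpoly : ∀ q, ∃ p : Polynomial ℝ, p.degree < m ∧ ∀ x, myG σ q x = p.eval x :=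
    fun q => poly_of_iter m (myG σ q) (hgsm q) (hvan q)
  -- Lagrange nodes
  set s : Finset ℝ := (Finset.range k).image (Nat.cast) with hs
  have hcard : s.card = k := by
    rw [hs, Finset.card_image_of_injective _ Nat.cast_injective, Finset.card_range]
  have hinj : Set.InjOn (id : ℝ → ℝ) s := Function.injective_id.injOn
  have hconv : ∀ x, Tendsto (fun q => myG σ q x) atTop (𝓝 (σ x)) := by
    intro x
    apply ContDiffBump.convolution_tendsto_right_of_continuous _ hc
    have := tendsto_one_div_add_atTop_nhds_zero_nat (𝕜 := ℝ)
    simp only [one_div] at this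
    simpa [myBump] using this
  -- each mollification equals its Lagrange interpolation
  have hrep : ∀ q x, myG σ q x = ∑ i ∈ s, myG σ q i * eval x (Lagrange.basis s id i) := by
    intro q x
    obtain ⟨p, hdeg, hp⟩ := hpoly q
    have hdeg' : p.degree < s.card := by
      rw [hcard]; exact lt_of_lt_of_le hdeg (by exact_mod_cast hmk.le)
    have := Lagrange.eq_interpolate hinj hdeg'
    calc myG σ q x = p.eval x := hp x
      _ = eval x (Lagrange.interpolate s id fun y => eval (id y) p) := by rw [← this]
      _ = ∑ i ∈ s, myG σ q i * eval x (Lagrange.basis s id i) := by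
          rw [Lagrange.interpolate_apply, eval_finset_sum]
          exact Finset.sum_congr rfl fun i _ => by rw [eval_mul, eval_C, id_eq, ← hp]
  -- pass to the limit
  apply hnp
  refine ⟨Lagrange.interpolate s id σ, fun x => ?_⟩
  have h1 : Tendsto (fun q => myG σ q x) atTop
      (𝓝 (∑ i ∈ s, σ i * eval x (Lagrange.basis s id i))) := by
    have : ∀ q, myG σ q x = ∑ i ∈ s, myG σ q i * eval x (Lagrange.basis s id i) := fun q => hrep q x
    rw [funext this]
    exact tendsto_finset_sum _ fun i _ => (hconv i).mul_const _
  have h2 := tendsto_nhds_unique (hconv x) h1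
  rw [h2, Lagrange.interpolate_apply, eval_finset_sum]
  exact Finset.sum_congr rfl fun i _ => by rw [eval_mul, eval_C]



variable {ι : Type*} [Fintype ι]

lemma exists_sep {k : ℕ} (p : Fin k → EuclideanSpace ℝ ι) (hp : Function.Injective p) :
    ∃ w : EuclideanSpace ℝ ι, Function.Injective fun i => ⟪w, p i⟫ := by
  classical
  set U : Set (EuclideanSpace ℝ ι) :=
    ⋃ (i : Fin k) (j : Fin k) (_ : i ≠ j),
      (LinearMap.ker ((innerSL ℝ (p i - p j)).toLinearMap) : Set (EuclideanSpace ℝ ι)) with hU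
  have hU0 : volume U = 0 := by
    refine measure_iUnion_null_iff.mpr fun i => measure_iUnion_null_iff.mpr fun j =>
      measure_iUnion_null_iff.mpr fun hij => ?_
    apply Measure.addHaar_submodule
    intro htop
    have : p i - p j ∈ LinearMap.ker ((innerSL ℝ (p i - p j)).toLinearMap) := by
      rw [htop]; trivial
    rw [LinearMap.mem_ker] at this
    simp only [ContinuousLinearMap.coe_coe, innerSL_apply_apply] at this
    rw [inner_self_eq_zero, sub_eq_zero] at this
    exact hij (hp this)
  have hne : U ≠ Set.univ := by
    intro heq
    have := isOpen_univ.measure_ne_zero (volume (α := EuclideanSpace ℝ ι)) Set.univ_nonempty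
    rw [← heq, hU0] at this
    exact this rfl
  obtain ⟨w, hw⟩ := Set.ne_univ_iff_exists_notMem U |>.mp hne
  refine ⟨w, fun i j hij => ?_⟩
  by_contra hne'
  apply hw
  rw [hU]
  refine Set.mem_iUnion.mpr ⟨i, Set.mem_iUnion.mpr ⟨j, Set.mem_iUnion.mpr ⟨hne', ?_⟩⟩⟩
  simp only [SetLike.mem_coe, LinearMap.mem_ker, ContinuousLinearMap.coe_coe, innerSL_apply_apply,
    inner_sub_left]
  simp only at hij
  rw [sub_eq_zero, real_inner_comm]
  exact hij.trans (real_inner_comm (p j) w)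

lemma span_top {k : ℕ} (p : Fin k → EuclideanSpace ℝ ι) (hp : Function.Injective p)
    (σ : ℝ → ℝ) (hc : Continuous σ) (hnp : ¬∃ q : Polynomial ℝ, ∀ x, σ x = q.eval x) :
    Submodule.span ℝ {v : EuclideanSpace ℝ (Fin k) |
      ∃ w b, v = fun i => σ (⟪w, p i⟫ + b)} = ⊤ := by
  by_contra h
  have hbot : (Submodule.span ℝ {v : EuclideanSpace ℝ (Fin k) |
      ∃ w b, v = fun i => σ (⟪w, p i⟫ + b)})ᗮ ≠ ⊥ :=
    fun hb => h (Submodule.orthogonal_eq_bot_iff.mp hb)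
  obtain ⟨lam, hlam, hlam0⟩ := Submodule.exists_mem_ne_zero_of_ne_bot hbot
  obtain ⟨w0, hw0⟩ := exists_sep p hp
  apply not_annihilate σ hc hnp (fun i => ⟪w0, p i⟫) lam hw0 (fun h0 => hlam0 (by ext i; simp [h0]))
  intro a b
  have hv : (WithLp.toLp 2 (fun i => σ (⟪a • w0, p i⟫ + b)) : EuclideanSpace ℝ (Fin k)) ∈ Submodule.span ℝ
      {v : EuclideanSpace ℝ (Fin k) | ∃ w b, v = fun i => σ (⟪w, p i⟫ + b)} :=
    Submodule.subset_span ⟨a • w0, b, rfl⟩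
  have := (Submodule.mem_orthogonal _ lam).mp hlam _ hv
  rw [PiLp.inner_apply] at this
  simp only [RCLike.inner_apply, starRingEnd_apply, star_trivial] at this
  rw [← this]
  refine Finset.sum_congr rfl fun i _ => ?_
  rw [real_inner_smul_left]
  ring

lemma interp_one {k : ℕ} (p : Fin k → EuclideanSpace ℝ ι) (hp : Function.Injective p)
    (σ : ℝ → ℝ) (hc : Continuous σ) (hnp : ¬∃ q : Polynomial ℝ, ∀ x, σ x = q.eval x)
    (v : Fin k → ℝ) :
    ∃ (N : ℕ) (w : Fin N → EuclideanSpace ℝ ι) (b c : Fin N → ℝ),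
      ∀ i, ∑ τ, c τ * σ (⟪w τ, p i⟫ + b τ) = v i := by
  have hsp := span_top p hp σ hc hnp
  have hv : (WithLp.toLp 2 v : EuclideanSpace ℝ (Fin k)) ∈ Submodule.span ℝ
      {u : EuclideanSpace ℝ (Fin k) | ∃ w b, u = fun i => σ (⟪w, p i⟫ + b)} := by
    rw [hsp]; trivial
  rw [Submodule.mem_span_set'] at hv
  obtain ⟨N, c, g, hg⟩ := hv
  choose w b hwb using fun τ => (g τ).2
  refine ⟨N, w, b, c, fun i => ?_⟩
  have := congrArg (fun u => u.ofLp i) hg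
  simp only [WithLp.ofLp_toLp] at this
  rw [← this]
  rw [WithLp.ofLp_sum, Finset.sum_apply]
  refine Finset.sum_congr rfl fun τ _ => ?_
  have := congrFun (hwb τ) i
  simp only [WithLp.ofLp_smul, Pi.smul_apply, smul_eq_mul]
  rw [this]


variable {ι : Type*} [Fintype ι]


lemma interp_two {k : ℕ} (p : Fin k → EuclideanSpace ℝ ι) (hp : Function.Injective p)
    (σ : ℝ → ℝ) (hc : Continuous σ) (hnp : ¬∃ q : Polynomial ℝ, ∀ x, σ x = q.eval x)
    (v0 v1 : Fin k → ℝ) :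
    ∃ (N : ℕ) (w : Fin N → EuclideanSpace ℝ ι) (b c0 c1 : Fin N → ℝ),
      ∀ i, (∑ τ, c0 τ * σ (⟪w τ, p i⟫ + b τ) = v0 i)
        ∧ (∑ τ, c1 τ * σ (⟪w τ, p i⟫ + b τ) = v1 i) := by
  obtain ⟨N0, w0, b0, c0, h0⟩ := interp_one p hp σ hc hnp v0
  obtain ⟨N1, w1, b1, c1, h1⟩ := interp_one p hp σ hc hnp v1
  refine ⟨N0 + N1, Fin.append w0 w1, Fin.append b0 b1,
    Fin.append c0 (fun _ => 0), Fin.append (fun _ => 0) c1, fun i => ⟨?_, ?_⟩⟩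
  · rw [Fin.sum_univ_add]
    simp only [Fin.append_left, Fin.append_right, zero_mul, Finset.sum_const_zero, add_zero]
    exact h0 i
  · rw [Fin.sum_univ_add]
    simp only [Fin.append_left, Fin.append_right, zero_mul, Finset.sum_const_zero, zero_add]
    exact h1 i


noncomputable def embFeat {f : ℕ} (z : (Fin f → ℂ) × (Fin f → ℂ)) :
    EuclideanSpace ℝ (Fin f × Fin 4) :=
  WithLp.toLp 2 fun sm => ![(z.1 sm.1).re, (z.1 sm.1).im, (z.2 sm.1).re, (z.2 sm.1).im] sm.2

lemma embFeat_inj {f : ℕ} : Function.Injective (embFeat (f := f)) := by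
  intro z z' h
  have h' : ∀ (s : Fin f) (m : Fin 4), embFeat z (s, m) = embFeat z' (s, m) :=
    fun s m => congrArg (fun u => u (s, m)) h
  refine Prod.ext (funext fun s => Complex.ext ?_ ?_) (funext fun s => Complex.ext ?_ ?_)
  · simpa [embFeat] using h' s 0
  · simpa [embFeat] using h' s 1
  · simpa [embFeat] using h' s 2
  · simpa [embFeat] using h' s 3

lemma inner_emb {f : ℕ} (w : EuclideanSpace ℝ (Fin f × Fin 4))
    (z : (Fin f → ℂ) × (Fin f → ℂ)) :
    (∑ s, (w (s,0) * (z.1 s).re + w (s,1) * (z.1 s).im +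
      w (s,2) * (z.2 s).re + w (s,3) * (z.2 s).im)) = ⟪w, embFeat z⟫ := by
  rw [PiLp.inner_apply]
  simp only [RCLike.inner_apply, starRingEnd_apply, star_trivial]
  rw [Fintype.sum_prod_type]
  refine Finset.sum_congr rfl fun s _ => ?_
  rw [Fin.sum_univ_four]
  simp [embFeat]
  ring

/-- If the pairs of node features attached to distinct edges are distinct, then for any
Hermitian complex weight matrix supported on the edges there is a function
`Φ(x_i, x_j) = σ̃(V[x_i ‖ x_j])` for `i ≤ j` (and the complex conjugate for `i > j`),
realized by an MLP, with `Φ(x_i, x_j) = W i j` on all edges up to arbitrarily small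
uniform error. -/
theorem stmt16 {n f : ℕ} (G : SimpleGraph (Fin n)) (x : Fin n → (Fin f → ℂ))
    (hdist : ∀ i j i' j' : Fin n, G.Adj i j → G.Adj i' j' → (i, j) ≠ (i', j') →
      (x i, x j) ≠ (x i', x j'))
    (W : Matrix (Fin n) (Fin n) ℂ) (hW : W.IsHermitian)
    (hsupp : ∀ i j, ¬ G.Adj i j → W i j = 0)
    (σact : ℝ → ℝ) (hσc : Continuous σact)
    (hσp : ¬ ∃ p : Polynomial ℝ, ∀ t, σact t = p.eval t)
    (ε : ℝ) (hε : 0 < ε) :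
    ∃ (N : ℕ) (A1 A2 A3 A4 : Fin N → Fin f → ℝ) (bb : Fin N → ℝ) (cc : Fin N → Fin 2 → ℝ),
      ∀ i j, G.Adj i j →
        norm
          ((if (i : ℕ) ≤ (j : ℕ) then mlpNet σact A1 A2 A3 A4 bb cc (x i) (x j)
            else starRingEnd ℂ (mlpNet σact A1 A2 A3 A4 bb cc (x j) (x i))) - W i j) < ε := by
  classical
  set K := {q : Fin n × Fin n // G.Adj q.1 q.2} with hK
  set k := Fintype.card K with hk
  set e : Fin k ≃ K := (Fintype.equivFin K).symm with he
  set p : Fin k → EuclideanSpace ℝ (Fin f × Fin 4) :=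
    fun r => embFeat (x (e r).1.1, x (e r).1.2) with hpdef
  have hpinj : Function.Injective p := by
    intro r r' hrr
    have hfeat := embFeat_inj hrr
    have hpair : (e r).1 = (e r').1 := by
      by_contra hne
      exact hdist _ _ _ _ (e r).2 (e r').2
        (by simpa [Prod.ext_iff] using hne) (by simpa [Prod.ext_iff] using hfeat)
    exact e.injective (Subtype.ext hpair)
  obtain ⟨N, w, b, c0, c1, hint⟩ := interp_two p hpinj σact hσc hσp
    (fun r => (W (e r).1.1 (e r).1.2).re) (fun r => (W (e r).1.1 (e r).1.2).im)
  refine ⟨N, (fun t s => w t (s,0)), (fun t s => w t (s,1)), (fun t s => w t (s,2)),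
    (fun t s => w t (s,3)), b, (fun t m => ![c0 t, c1 t] m), ?_⟩
  have key : ∀ (i j : Fin n) (h : G.Adj i j),
      mlpNet σact (fun t s => w t (s,0)) (fun t s => w t (s,1)) (fun t s => w t (s,2))
        (fun t s => w t (s,3)) b (fun t m => ![c0 t, c1 t] m) (x i) (x j) = W i j := by
    intro i j h
    set r : Fin k := e.symm ⟨(i,j), h⟩ with hr
    have her : e r = ⟨(i,j), h⟩ := e.apply_symm_apply _
    have hpr : p r = embFeat (x i, x j) := by simp only [hpdef, her]
    have hsum : ∀ t, (∑ s, (w t (s,0) * (x i s).re + w t (s,1) * (x i s).im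
        + w t (s,2) * (x j s).re + w t (s,3) * (x j s).im)) = ⟪w t, p r⟫ := by
      intro t
      rw [hpr]
      exact inner_emb (w t) (x i, x j)
    have h0 := (hint r).1
    have h1 := (hint r).2
    simp only [← hsum] at h0 h1
    rw [mlpNet]
    simp only [Matrix.cons_val_zero, Matrix.cons_val_one, Matrix.head_cons]
    rw [h0, h1, her]
    exact Complex.re_add_im _
  intro i j hadj
  rcases le_or_gt (i : ℕ) (j : ℕ) with hle | hlt
  · rw [if_pos hle, key i j hadj]
    simpa using hε
  · rw [if_neg (not_le.mpr hlt), key j i hadj.symm]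
    have : (starRingEnd ℂ) (W j i) = W i j := hW.apply i j
    rw [this]
    simpa using hε
end
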